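/- arXiv:1605.07956 — 2 statements merged into one kernel-verified Lean document; each statement's English description precedes it below -/
import Mathlib

section
/- Let X₁,…,Xₙ be i.i.d. Bernoulli(p) random variables (each equal to 1 with probability p and 0 with probability 1−p), and let M(X) = Σ_{i=1}^n X_i. Fix δ with δ ≥ P(M(X)=0) + P(M(X)=n), i.e. δ ≥ (1−p)^n + p^n, and set λ = sqrt(n·ln(2/δ)/2); assume 0 < λ < np and 0 < λ < n(1−p). Define ε = sqrt(ln(2/δ)/(2n)) · (1/(1−p) − 1/(sqrt(ln(2/δ)/(2n)) − p)) when p ≤ 1/2, and ε = sqrt(ln(2/δ)/(2n)) · (1/p − 1/(sqrt(ln(2/δ)/(2n)) − (1−p))) when p > 1/2. Then for every index j ≤ n and every set B of integers, P(Σ_{i=1}^n X_i ∈ B) ≤ e^ε · P(Σ_{i≠j} X_i ∈ B) + δ and P(Σ_{i≠j} X_i ∈ B) ≤ e^ε · P(Σ_{i=1}^n X_i ∈ B) + δ; that is, the sum mechanism on this data is (ε,δ)-noiseless private. -/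
open Finset

-- key elementary inequality: exp x * (2 - x) ≤ 2 + x for x ≥ 0
lemma exp_mul_two_sub_le (x : ℝ) (hx : 0 ≤ x) : Real.exp x * (2 - x) ≤ 2 + x := by
  have key : ∀ y : ℝ, Real.exp y * (1 - y) ≤ 1 := by
    intro y
    rcases le_or_gt 1 y with hy | hy
    · have : Real.exp y * (1 - y) ≤ 0 :=
        mul_nonpos_of_nonneg_of_nonpos (Real.exp_pos y).le (by linarith)
      linarith
    · have h1 : 1 - y ≤ Real.exp (-y) := by
        have := Real.add_one_le_exp (-y); linarith
      calc Real.exp y * (1 - y) ≤ Real.exp y * Real.exp (-y) := by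
            exact mul_le_mul_of_nonneg_left h1 (Real.exp_pos y).le
        _ = 1 := by rw [← Real.exp_add]; simp
  set f : ℝ → ℝ := fun x => 2 + x - Real.exp x * (2 - x) with hf
  have hderiv : ∀ y : ℝ, HasDerivAt f (1 - Real.exp y * (1 - y)) y := by
    intro y
    have h1 : HasDerivAt (fun x : ℝ => Real.exp x * (2 - x))
        (Real.exp y * (2 - y) + Real.exp y * (-1)) y :=
      (Real.hasDerivAt_exp y).mul (by simpa using ((hasDerivAt_id y).const_sub (2:ℝ)))
    have h2 : HasDerivAt (fun x : ℝ => 2 + x) 1 y := by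
      simpa using (hasDerivAt_id y).const_add (2:ℝ)
    have := h2.sub h1
    exact this.congr_deriv (by ring)
  have hmono : Monotone f := by
    apply monotone_of_deriv_nonneg
    · exact fun y => (hderiv y).differentiableAt
    · intro y
      rw [(hderiv y).deriv]
      have := key y
      linarith
  have h0 : f 0 ≤ f x := hmono hx
  simp only [hf] at h0
  norm_num at h0
  linarith

-- Hoeffding's lemma for Bernoulli mgf
lemma bernoulli_mgf_le (p t : ℝ) (hp0 : 0 ≤ p) (hp1 : p ≤ 1) (ht : 0 ≤ t) :
    (1 - p) + p * Real.exp t ≤ Real.exp (p * t + t ^ 2 / 8) := by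
  set q := 1 - p with hq
  have hq0 : 0 ≤ q := by linarith
  have hD : ∀ u : ℝ, 0 < q + p * Real.exp u := by
    intro u
    rcases eq_or_lt_of_le hp0 with h | h
    · simp [← h]; linarith
    · have : 0 < p * Real.exp u := mul_pos h (Real.exp_pos u)
      linarith
  -- derivative bound
  have hkey : ∀ u : ℝ, 0 ≤ u →
      p * Real.exp u / (q + p * Real.exp u) - p - u / 4 ≤ 0 := by
    intro u hu
    have hE1 : 1 ≤ Real.exp u := Real.one_le_exp hu
    have hDu := hD u
    have hfrac : p * Real.exp u / (q + p * Real.exp u) - p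
        = p * q * (Real.exp u - 1) / (q + p * Real.exp u) := by
      field_simp
      ring
    rw [hfrac]
    rcases eq_or_lt_of_le (mul_nonneg hp0 hq0) with hpq | hpq
    · rw [← hpq]
      have : (0:ℝ) * (Real.exp u - 1) / (q + p * Real.exp u) = 0 := by simp
      rw [this]; linarith
    · -- pq > 0
      set r := Real.exp (u / 2) with hr
      have hr1 : 1 ≤ r := Real.one_le_exp (by linarith)
      have hE : Real.exp u = r ^ 2 := by
        rw [hr, sq, ← Real.exp_add]; ring_nf
      have hDlb : p * q * (r + 1) ^ 2 ≤ q + p * Real.exp u := by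
        have expand : q + p * Real.exp u - p * q * (r + 1) ^ 2 = (q - p * r) ^ 2 := by
          rw [hE, hq]; ring
        linarith [sq_nonneg (q - p * r)]
      have hDlb0 : 0 < p * q * (r + 1) ^ 2 := by positivity
      have htanh : 4 * (r - 1) ≤ u * (r + 1) := by
        have := exp_mul_two_sub_le (u / 2) (by linarith)
        rw [← hr] at this
        nlinarith
      have step1 : p * q * (Real.exp u - 1) / (q + p * Real.exp u)
          ≤ p * q * (Real.exp u - 1) / (p * q * (r + 1) ^ 2) := by
        apply div_le_div_of_nonneg_left _ hDlb0 hDlb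
        · nlinarith
      have step2 : p * q * (Real.exp u - 1) / (p * q * (r + 1) ^ 2)
          = (r - 1) / (r + 1) := by
        rw [hE]
        rw [mul_div_assoc]  -- maybe not needed
        have hp' : p ≠ 0 := by rintro rfl; simp at hpq
        have hq' : q ≠ 0 := by intro h; rw [h] at hpq; simp at hpq
        have hr' : r + 1 ≠ 0 := (by linarith : (0:ℝ) < r + 1).ne'
        field_simp
        ring
      have step3 : (r - 1) / (r + 1) ≤ u / 4 := by
        rw [div_le_div_iff₀ (by linarith) (by norm_num)]
        linarith
      linarith [step1, step2.le, step2.ge, step3]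
  -- antitone argument
  set φ : ℝ → ℝ := fun u => Real.log (q + p * Real.exp u) - p * u - u ^ 2 / 8 with hφ
  have hderiv : ∀ u : ℝ, HasDerivAt φ
      (p * Real.exp u / (q + p * Real.exp u) - p - u / 4) u := by
    intro u
    have h1 : HasDerivAt (fun x : ℝ => q + p * Real.exp x) (p * Real.exp u) u := by
      simpa using ((Real.hasDerivAt_exp u).const_mul p).const_add q
    have h2 := h1.log (ne_of_gt (hD u))
    have h3 : HasDerivAt (fun x : ℝ => p * x) p u := by
      simpa using (hasDerivAt_id u).const_mul p
    have h4 : HasDerivAt (fun x : ℝ => x ^ 2 / 8) (2 * u / 8) u := by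
      simpa using (hasDerivAt_pow 2 u).div_const 8
    have := (h2.sub h3).sub h4
    exact this.congr_deriv (by ring)
  have hanti : AntitoneOn φ (Set.Ici 0) := by
    apply antitoneOn_of_deriv_nonpos (convex_Ici 0)
    · exact fun u _ => ((hderiv u).differentiableAt).continuousAt.continuousWithinAt
    · intro u hu
      exact ((hderiv u).differentiableAt).differentiableWithinAt
    · intro u hu
      rw [(hderiv u).deriv]
      exact hkey u (le_of_lt (by simpa using hu))
  have h0 : φ t ≤ φ 0 := hanti (Set.self_mem_Ici) (Set.mem_Ici.mpr ht) ht
  have hφ0 : φ 0 = 0 := by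
    simp [hφ, hq]
  rw [hφ0] at h0
  have hlog : Real.log (q + p * Real.exp t) ≤ p * t + t ^ 2 / 8 := by
    simp only [hφ] at h0; linarith
  calc (1 - p) + p * Real.exp t = q + p * Real.exp t := by rw [hq]
    _ = Real.exp (Real.log (q + p * Real.exp t)) := (Real.exp_log (hD t)).symm
    _ ≤ Real.exp (p * t + t ^ 2 / 8) := Real.exp_le_exp.mpr hlog

-- upper tail for binomial
lemma binom_tail_upper (n : ℕ) (hn : 0 < n) (p lam : ℝ) (hp0 : 0 ≤ p) (hp1 : p ≤ 1)
    (hl : 0 ≤ lam) :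
    ∑ k ∈ (Finset.range (n+1)).filter (fun k : ℕ => (n:ℝ) * p + lam < (k:ℝ)),
      (n.choose k : ℝ) * p ^ k * (1 - p) ^ (n - k) ≤ Real.exp (-2 * lam ^ 2 / n) := by
  have hn' : (0:ℝ) < n := by exact_mod_cast hn
  set t := 4 * lam / n with ht
  have ht0 : 0 ≤ t := by positivity
  set c := (n:ℝ) * p + lam with hc
  have step1 : ∑ k ∈ (Finset.range (n+1)).filter (fun k : ℕ => c < (k:ℝ)),
      (n.choose k : ℝ) * p ^ k * (1 - p) ^ (n - k)
      ≤ ∑ k ∈ Finset.range (n+1),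
        (n.choose k : ℝ) * p ^ k * (1 - p) ^ (n - k) * Real.exp (t * ((k:ℝ) - c)) := by
    apply le_trans (Finset.sum_le_sum ?_)
      (Finset.sum_le_sum_of_subset_of_nonneg (Finset.filter_subset _ _) ?_)
    · intro k hk
      simp only [Finset.mem_filter] at hk
      have h1 : (1:ℝ) ≤ Real.exp (t * ((k:ℝ) - c)) := by
        apply Real.one_le_exp
        have h2 : (0:ℝ) ≤ (k:ℝ) - c := by linarith [hk.2]
        positivity
      have hterm : (0:ℝ) ≤ (n.choose k : ℝ) * p ^ k * (1 - p) ^ (n - k) :=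
        mul_nonneg (mul_nonneg (Nat.cast_nonneg _) (pow_nonneg hp0 _))
          (pow_nonneg (by linarith) _)
      nlinarith
    · intro k _ _
      have hterm : (0:ℝ) ≤ (n.choose k : ℝ) * p ^ k * (1 - p) ^ (n - k) :=
        mul_nonneg (mul_nonneg (Nat.cast_nonneg _) (pow_nonneg hp0 _))
          (pow_nonneg (by linarith) _)
      have : (0:ℝ) < Real.exp (t * ((k:ℝ) - c)) := Real.exp_pos _
      nlinarith
  have step2 : ∑ k ∈ Finset.range (n+1),
        (n.choose k : ℝ) * p ^ k * (1 - p) ^ (n - k) * Real.exp (t * ((k:ℝ) - c))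
      = Real.exp (-(t * c)) *
        ∑ k ∈ Finset.range (n+1), (p * Real.exp t) ^ k * (1 - p) ^ (n - k) * (n.choose k : ℝ) := by
    rw [Finset.mul_sum]
    apply Finset.sum_congr rfl
    intro k _
    have he1 : Real.exp (t * ((k:ℝ) - c)) = Real.exp (t * (k:ℝ)) * Real.exp (-(t * c)) := by
      rw [← Real.exp_add]; ring_nf
    have he2 : (p * Real.exp t) ^ k = p ^ k * Real.exp (t * (k:ℝ)) := by
      rw [mul_pow, mul_comm t (k:ℝ), Real.exp_nat_mul]
    rw [he1, he2]; ring
  have step3 : ∑ k ∈ Finset.range (n+1), (p * Real.exp t) ^ k * (1 - p) ^ (n - k) * (n.choose k : ℝ)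
      = (p * Real.exp t + (1 - p)) ^ n := (add_pow _ _ n).symm
  have hmgf : p * Real.exp t + (1 - p) ≤ Real.exp (p * t + t ^ 2 / 8) := by
    have := bernoulli_mgf_le p t hp0 hp1 ht0
    linarith
  have hbase0 : 0 ≤ p * Real.exp t + (1 - p) := by
    have : 0 ≤ p * Real.exp t := by positivity
    linarith
  have step4 : (p * Real.exp t + (1 - p)) ^ n ≤ Real.exp (p * t + t ^ 2 / 8) ^ n :=
    pow_le_pow_left₀ hbase0 hmgf n
  have step5 : Real.exp (-(t * c)) * Real.exp (p * t + t ^ 2 / 8) ^ n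
      = Real.exp (-2 * lam ^ 2 / n) := by
    rw [← Real.exp_nat_mul, ← Real.exp_add]
    congr 1
    rw [hc, ht]
    field_simp
    ring
  calc ∑ k ∈ (Finset.range (n+1)).filter (fun k : ℕ => c < (k:ℝ)),
        (n.choose k : ℝ) * p ^ k * (1 - p) ^ (n - k)
      ≤ Real.exp (-(t * c)) *
        ∑ k ∈ Finset.range (n+1), (p * Real.exp t) ^ k * (1 - p) ^ (n - k) * (n.choose k : ℝ) := by
        rw [← step2]; exact step1
    _ = Real.exp (-(t * c)) * (p * Real.exp t + (1 - p)) ^ n := by rw [step3]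
    _ ≤ Real.exp (-(t * c)) * Real.exp (p * t + t ^ 2 / 8) ^ n := by
        apply mul_le_mul_of_nonneg_left step4 (Real.exp_pos _).le
    _ = Real.exp (-2 * lam ^ 2 / n) := step5

-- lower tail for binomial
lemma binom_tail_lower (n : ℕ) (hn : 0 < n) (p lam : ℝ) (hp0 : 0 ≤ p) (hp1 : p ≤ 1)
    (hl : 0 ≤ lam) :
    ∑ k ∈ (Finset.range (n+1)).filter (fun k : ℕ => (k:ℝ) < (n:ℝ) * p - lam),
      (n.choose k : ℝ) * p ^ k * (1 - p) ^ (n - k) ≤ Real.exp (-2 * lam ^ 2 / n) := by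
  have key := binom_tail_upper n hn (1 - p) lam (by linarith) (by linarith) hl
  rw [show (1:ℝ) - (1 - p) = p by ring] at key
  refine le_trans (le_of_eq ?_) key
  apply Finset.sum_nbij' (fun k => n - k) (fun k => n - k)
  · intro k hk
    simp only [Finset.mem_filter, Finset.mem_range] at hk ⊢
    have hkn : k ≤ n := by omega
    constructor
    · omega
    · have hcast : ((n - k : ℕ) : ℝ) = (n:ℝ) - (k:ℝ) := by
        push_cast [hkn]; ring
      rw [hcast]
      have := hk.2
      linarith
  · intro k hk
    simp only [Finset.mem_filter, Finset.mem_range] at hk ⊢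
    have hkn : k ≤ n := by omega
    have hcast : ((n - k : ℕ) : ℝ) = (n:ℝ) - (k:ℝ) := by push_cast [hkn]; ring
    constructor
    · omega
    · rw [hcast]
      have := hk.2
      linarith
  · intro k hk
    simp only [Finset.mem_filter, Finset.mem_range] at hk
    omega
  · intro k hk
    simp only [Finset.mem_filter, Finset.mem_range] at hk
    omega
  · intro k hk
    simp only [Finset.mem_filter, Finset.mem_range] at hk
    have hkn : k ≤ n := by omega
    rw [Nat.choose_symm hkn, Nat.sub_sub_self hkn]
    ring
open MeasureTheory ProbabilityTheory Finset

section prob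
variable {Ω : Type*} [MeasurableSpace Ω] (μ : Measure Ω) [IsProbabilityMeasure μ]
  {n : ℕ} {p : ℝ} (X : Fin n → Ω → ℝ)

lemma bern_null (hp0 : 0 < p) (hp1 : p < 1) (hXmeas : ∀ i, Measurable (X i))
    (hBern1 : ∀ i, μ {ω | X i ω = 1} = ENNReal.ofReal p)
    (hBern0 : ∀ i, μ {ω | X i ω = 0} = ENNReal.ofReal (1 - p)) :
    μ {ω | ¬ ∀ i : Fin n, X i ω = 0 ∨ X i ω = 1} = 0 := by
  have hset : {ω | ¬ ∀ i : Fin n, X i ω = 0 ∨ X i ω = 1}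
      = ⋃ i, ({ω | X i ω = 0} ∪ {ω | X i ω = 1})ᶜ := by
    ext ω
    simp [not_forall]
  rw [hset]
  apply measure_iUnion_null
  intro i
  have hm0 : MeasurableSet {ω | X i ω = 0} := measurableSet_eq_fun (hXmeas i) measurable_const
  have hm1 : MeasurableSet {ω | X i ω = 1} := measurableSet_eq_fun (hXmeas i) measurable_const
  have hdis : Disjoint {ω | X i ω = 0} {ω | X i ω = 1} := by
    rw [Set.disjoint_left]
    intro ω h0 h1
    simp only [Set.mem_setOf_eq] at h0 h1
    rw [h0] at h1; norm_num at h1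
  have huni : μ ({ω | X i ω = 0} ∪ {ω | X i ω = 1}) = 1 := by
    rw [measure_union hdis hm1, hBern0 i, hBern1 i, ← ENNReal.ofReal_add (by linarith) (by linarith)]
    norm_num
  rw [measure_compl (hm0.union hm1) (measure_ne_top μ _), huni, measure_univ, tsub_self]

lemma sum_zero_one_exists {s : Finset (Fin n)} {x : Fin n → ℝ}
    (h : ∀ i : Fin n, x i = 0 ∨ x i = 1) :
    ∃ k : ℕ, k ≤ s.card ∧ ∑ i ∈ s, x i = (k : ℝ) := by
  classical
  induction s using Finset.induction_on with
  | empty => exact ⟨0, by simp⟩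
  | @insert j s hj ih =>
    obtain ⟨k, hk, hsum⟩ := ih
    rcases h j with h0 | h1
    · refine ⟨k, ?_, ?_⟩
      · rw [Finset.card_insert_of_notMem hj]; omega
      · rw [Finset.sum_insert hj, h0, hsum]; ring
    · refine ⟨k + 1, ?_, ?_⟩
      · rw [Finset.card_insert_of_notMem hj]; omega
      · rw [Finset.sum_insert hj, h1, hsum]; push_cast; ring

lemma sum_eq_neg_null (hp0 : 0 < p) (hp1 : p < 1) (hXmeas : ∀ i, Measurable (X i))
    (hBern1 : ∀ i, μ {ω | X i ω = 1} = ENNReal.ofReal p)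
    (hBern0 : ∀ i, μ {ω | X i ω = 0} = ENNReal.ofReal (1 - p))
    (s : Finset (Fin n)) (c : ℝ) (hc : c < 0) :
    μ {ω | ∑ i ∈ s, X i ω = c} = 0 := by
  apply measure_mono_null _ (bern_null μ X hp0 hp1 hXmeas hBern1 hBern0)
  intro ω hω
  simp only [Set.mem_setOf_eq] at hω ⊢
  intro hall
  obtain ⟨k, _, hk⟩ := sum_zero_one_exists (x := fun i => X i ω) hall
  rw [hω] at hk
  have : (0:ℝ) ≤ (k:ℝ) := Nat.cast_nonneg k
  linarith

lemma sum_pmf (hp0 : 0 < p) (hp1 : p < 1) (hXmeas : ∀ i, Measurable (X i))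
    (hindep : iIndepFun X μ)
    (hBern1 : ∀ i, μ {ω | X i ω = 1} = ENNReal.ofReal p)
    (hBern0 : ∀ i, μ {ω | X i ω = 0} = ENNReal.ofReal (1 - p))
    (s : Finset (Fin n)) :
    ∀ k : ℕ, μ {ω | ∑ i ∈ s, X i ω = (k : ℝ)}
      = ENNReal.ofReal ((s.card.choose k : ℝ) * p ^ k * (1 - p) ^ (s.card - k)) := by
  classical
  induction s using Finset.induction_on with
  | empty =>
    intro k
    cases k with
    | zero => simp
    | succ k' =>
      have : {ω : Ω | ∑ i ∈ (∅ : Finset (Fin n)), X i ω = ((k' + 1 : ℕ) : ℝ)} = ∅ := by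
        ext ω; simp only [Finset.sum_empty, Set.mem_setOf_eq, Set.mem_empty_iff_false,
          iff_false]
        intro h
        have : ((0:ℕ):ℝ) = ((k'+1:ℕ):ℝ) := by push_cast at h ⊢; linarith
        exact Nat.succ_ne_zero k' (Nat.cast_injective this).symm
      rw [this]
      simp
  | @insert j s hj ih =>
    intro k
    set m := s.card with hm
    set T : Ω → ℝ := fun ω => ∑ i ∈ s, X i ω with hT
    have hTmeas : Measurable T := Finset.measurable_sum s (fun i _ => hXmeas i)
    have hXT : IndepFun (X j) T μ := by
      have h := (iIndepFun.indepFun_finset_sum_of_notMem hindep hXmeas hj).symm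
      have heq : (∑ i ∈ s, X i) = T := by
        funext ω; rw [hT]; simp [Finset.sum_apply]
      rwa [heq] at h
    have hcard : (insert j s).card = m + 1 := Finset.card_insert_of_notMem hj
    have hsum : ∀ ω, ∑ i ∈ insert j s, X i ω = X j ω + T ω := fun ω =>
      Finset.sum_insert hj
    set A0 := {ω : Ω | X j ω = 0} with hA0
    set A1 := {ω : Ω | X j ω = 1} with hA1
    have hm0 : MeasurableSet A0 := measurableSet_eq_fun (hXmeas j) measurable_const
    have hm1 : MeasurableSet A1 := measurableSet_eq_fun (hXmeas j) measurable_const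
    set E := {ω : Ω | X j ω + T ω = (k : ℝ)} with hE
    have hEmeas : MeasurableSet E := measurableSet_eq_fun ((hXmeas j).add hTmeas)
      measurable_const
    have hEset : {ω | ∑ i ∈ insert j s, X i ω = (k:ℝ)} = E := by
      ext ω; simp only [Set.mem_setOf_eq, hE, hsum ω]
    have hdis : Disjoint A0 A1 := by
      rw [Set.disjoint_left]
      intro ω h0 h1
      simp only [hA0, hA1, Set.mem_setOf_eq] at h0 h1
      rw [h0] at h1; norm_num at h1
    have huni : μ (A0 ∪ A1) = 1 := by
      rw [measure_union hdis hm1, hBern0 j, hBern1 j,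
        ← ENNReal.ofReal_add (by linarith) (by linarith)]
      norm_num
    have hcompl : μ ((A0 ∪ A1)ᶜ) = 0 := by
      rw [measure_compl (hm0.union hm1) (measure_ne_top μ _), huni, measure_univ, tsub_self]
    have hsplit : μ E = μ (E ∩ A0) + μ (E ∩ A1) := by
      have hsub : E ⊆ (E ∩ A0) ∪ (E ∩ A1) ∪ (A0 ∪ A1)ᶜ := by
        intro ω hω
        by_cases h : ω ∈ A0 ∪ A1
        · rcases h with h | h
          · exact Or.inl (Or.inl ⟨hω, h⟩)
          · exact Or.inl (Or.inr ⟨hω, h⟩)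
        · exact Or.inr h
      have hle : μ E ≤ μ (E ∩ A0) + μ (E ∩ A1) := by
        calc μ E ≤ μ ((E ∩ A0) ∪ (E ∩ A1) ∪ (A0 ∪ A1)ᶜ) := measure_mono hsub
          _ ≤ μ ((E ∩ A0) ∪ (E ∩ A1)) + μ ((A0 ∪ A1)ᶜ) := measure_union_le _ _
          _ = μ ((E ∩ A0) ∪ (E ∩ A1)) := by rw [hcompl, add_zero]
          _ ≤ μ (E ∩ A0) + μ (E ∩ A1) := measure_union_le _ _
      have hge : μ (E ∩ A0) + μ (E ∩ A1) ≤ μ E := by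
        rw [← measure_union (hdis.mono Set.inter_subset_right Set.inter_subset_right)
          (hEmeas.inter hm1)]
        exact measure_mono (Set.union_subset Set.inter_subset_left Set.inter_subset_left)
      exact le_antisymm hle hge
    have hEA0 : E ∩ A0 = X j ⁻¹' {0} ∩ T ⁻¹' {(k:ℝ)} := by
      ext ω
      simp only [hE, hA0, Set.mem_inter_iff, Set.mem_setOf_eq, Set.mem_preimage,
        Set.mem_singleton_iff]
      constructor
      · rintro ⟨h1, h2⟩; exact ⟨h2, by linarith⟩
      · rintro ⟨h1, h2⟩; exact ⟨by linarith, h1⟩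
    have hEA1 : E ∩ A1 = X j ⁻¹' {1} ∩ T ⁻¹' {(k:ℝ) - 1} := by
      ext ω
      simp only [hE, hA1, Set.mem_inter_iff, Set.mem_setOf_eq, Set.mem_preimage,
        Set.mem_singleton_iff]
      constructor
      · rintro ⟨h1, h2⟩; exact ⟨h2, by linarith⟩
      · rintro ⟨h1, h2⟩; exact ⟨by linarith, h1⟩
    have hpre0 : X j ⁻¹' {0} = A0 := by ext ω; simp [hA0]
    have hpre1 : X j ⁻¹' {1} = A1 := by ext ω; simp [hA1]
    have hmul0 : μ (E ∩ A0) = ENNReal.ofReal (1 - p) * μ (T ⁻¹' {(k:ℝ)}) := by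
      rw [hEA0, hXT.measure_inter_preimage_eq_mul _ _ (measurableSet_singleton _)
        (measurableSet_singleton _), hpre0, ← hBern0 j]
    have hmul1 : μ (E ∩ A1) = ENNReal.ofReal p * μ (T ⁻¹' {(k:ℝ) - 1}) := by
      rw [hEA1, hXT.measure_inter_preimage_eq_mul _ _ (measurableSet_singleton _)
        (measurableSet_singleton _), hpre1, ← hBern1 j]
    have hTk : μ (T ⁻¹' {(k:ℝ)})
        = ENNReal.ofReal ((m.choose k : ℝ) * p ^ k * (1 - p) ^ (m - k)) := by
      have : T ⁻¹' {(k:ℝ)} = {ω | ∑ i ∈ s, X i ω = (k:ℝ)} := by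
        ext ω; simp [hT]
      rw [this, ih k]
    rw [hEset, hsplit, hmul0, hmul1, hTk, hcard]
    cases k with
    | zero =>
      have hneg : μ (T ⁻¹' {((0:ℕ):ℝ) - 1}) = 0 := by
        have : T ⁻¹' {((0:ℕ):ℝ) - 1} = {ω | ∑ i ∈ s, X i ω = ((0:ℕ):ℝ) - 1} := by
          ext ω; simp [hT]
        rw [this]
        exact sum_eq_neg_null μ X hp0 hp1 hXmeas hBern1 hBern0 s _ (by norm_num)
      rw [hneg, mul_zero, add_zero, ← ENNReal.ofReal_mul (by linarith)]
      congr 1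
      simp only [Nat.choose_zero_right, Nat.cast_one, pow_zero, Nat.sub_zero]
      ring
    | succ k' =>
      have hk1 : ((k' + 1 : ℕ) : ℝ) - 1 = (k' : ℝ) := by push_cast; ring
      have hTk' : μ (T ⁻¹' {((k' + 1 : ℕ):ℝ) - 1})
          = ENNReal.ofReal ((m.choose k' : ℝ) * p ^ k' * (1 - p) ^ (m - k')) := by
        have : T ⁻¹' {((k' + 1:ℕ):ℝ) - 1} = {ω | ∑ i ∈ s, X i ω = ((k':ℕ):ℝ)} := by
          ext ω; simp [hT, hk1]
        rw [this, ih k']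
      rw [hTk']
      rw [← ENNReal.ofReal_mul (by linarith), ← ENNReal.ofReal_mul (by linarith)]
      rw [← ENNReal.ofReal_add]
      · congr 1
        rcases lt_trichotomy (k' + 1) (m + 1) with hlt | heq | hgt
        · -- k' + 1 ≤ m
          have hk'm : k' + 1 ≤ m := by omega
          have h1 : m - k' = (m - (k' + 1)) + 1 := by omega
          have h2 : m + 1 - (k' + 1) = m - k' := by omega
          rw [h2, h1, Nat.choose_succ_succ m k']
          push_cast
          ring
        · -- k' = m
          have h1 : m.choose (k' + 1) = 0 := Nat.choose_eq_zero_of_lt (by omega)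
          have h2 : m.choose k' = 1 := by rw [show k' = m by omega]; exact Nat.choose_self m
          have h3 : (m+1).choose (k'+1) = 1 := by
            rw [show k' = m by omega]; exact Nat.choose_self (m+1)
          have h4 : m - k' = 0 := by omega
          have h5 : m + 1 - (k' + 1) = 0 := by omega
          rw [h1, h2, h3, h4, h5]
          push_cast; ring
        · -- k' > m
          have h1 : m.choose (k' + 1) = 0 := Nat.choose_eq_zero_of_lt (by omega)
          have h2 : m.choose k' = 0 := Nat.choose_eq_zero_of_lt (by omega)
          have h3 : (m+1).choose (k'+1) = 0 := Nat.choose_eq_zero_of_lt (by omega)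
          rw [h1, h2, h3]
          push_cast; ring
      · exact mul_nonneg (by linarith) (mul_nonneg (mul_nonneg (Nat.cast_nonneg _)
          (pow_nonneg hp0.le _)) (pow_nonneg (by linarith) _))
      · exact mul_nonneg hp0.le (mul_nonneg (mul_nonneg (Nat.cast_nonneg _)
          (pow_nonneg hp0.le _)) (pow_nonneg (by linarith) _))

open scoped Classical in
lemma event_measure (hp0 : 0 < p) (hp1 : p < 1) (hXmeas : ∀ i, Measurable (X i))
    (hindep : iIndepFun X μ)
    (hBern1 : ∀ i, μ {ω | X i ω = 1} = ENNReal.ofReal p)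
    (hBern0 : ∀ i, μ {ω | X i ω = 0} = ENNReal.ofReal (1 - p))
    (s : Finset (Fin n)) (B : Set ℝ) :
    μ {ω | (∑ i ∈ s, X i ω) ∈ B}
      = ∑ k ∈ (Finset.range (s.card + 1)).filter (fun k : ℕ => (k:ℝ) ∈ B),
          ENNReal.ofReal ((s.card.choose k : ℝ) * p ^ k * (1 - p) ^ (s.card - k)) := by
  classical
  set F := (Finset.range (s.card + 1)).filter (fun k : ℕ => (k:ℝ) ∈ B) with hF
  have hN : ∀ᵐ ω ∂μ, ∀ i : Fin n, X i ω = 0 ∨ X i ω = 1 := by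
    rw [ae_iff]
    exact bern_null μ X hp0 hp1 hXmeas hBern1 hBern0
  have hcong : μ {ω | (∑ i ∈ s, X i ω) ∈ B}
      = μ (⋃ k ∈ F, {ω | ∑ i ∈ s, X i ω = (k:ℝ)}) := by
    apply measure_congr
    rw [Filter.eventuallyEq_set]
    filter_upwards [hN] with ω hω
    simp only [Set.mem_setOf_eq, Set.mem_iUnion, exists_prop]
    constructor
    · intro hB
      obtain ⟨k, hk, hkeq⟩ := sum_zero_one_exists (x := fun i => X i ω) hω
      refine ⟨k, ?_, hkeq⟩
      rw [hF, Finset.mem_filter, Finset.mem_range]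
      exact ⟨by omega, by rw [← hkeq]; exact hB⟩
    · rintro ⟨k, hkF, hkeq⟩
      rw [hF, Finset.mem_filter] at hkF
      rw [hkeq]
      exact hkF.2
  rw [hcong, measure_biUnion_finset ?_ ?_]
  · apply Finset.sum_congr rfl
    intro k _
    exact sum_pmf μ X hp0 hp1 hXmeas hindep hBern1 hBern0 s k
  · intro a _ b _ hab
    simp only [Function.onFun]
    rw [Set.disjoint_left]
    intro ω ha hb
    simp only [Set.mem_setOf_eq] at ha hb
    rw [ha] at hb
    exact hab (Nat.cast_injective hb)
  · intro k _
    exact measurableSet_eq_fun (Finset.measurable_sum s (fun i _ => hXmeas i)) measurable_const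

end prob

-- Core real-number inequality
set_option maxHeartbeats 1000000 in
open scoped Classical in
lemma main_real (n : ℕ) (hn2 : 2 ≤ n) (p δ lam ε : ℝ) (hp0 : 0 < p) (hp1 : p < 1)
    (hδ0 : 0 < δ) (hδ1 : δ < 1)
    (hlam : lam = Real.sqrt ((n : ℝ) * Real.log (2 / δ) / 2))
    (hlam0 : 0 < lam) (hlam1 : lam < (n : ℝ) * p) (hlam2 : lam < (n : ℝ) * (1 - p))
    (hε : ε = if p ≤ 1 / 2 then
        Real.sqrt (Real.log (2 / δ) / (2 * (n : ℝ))) *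
          (1 / (1 - p) - 1 / (Real.sqrt (Real.log (2 / δ) / (2 * (n : ℝ))) - p))
      else
        Real.sqrt (Real.log (2 / δ) / (2 * (n : ℝ))) *
          (1 / p - 1 / (Real.sqrt (Real.log (2 / δ) / (2 * (n : ℝ))) - (1 - p))))
    (B : Set ℝ) :
    (∑ k ∈ (Finset.range (n+1)).filter (fun k : ℕ => (k:ℝ) ∈ B),
        (n.choose k : ℝ) * p ^ k * (1 - p) ^ (n - k))
      ≤ Real.exp ε * (∑ k ∈ (Finset.range ((n-1)+1)).filter (fun k : ℕ => (k:ℝ) ∈ B),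
        ((n-1).choose k : ℝ) * p ^ k * (1 - p) ^ ((n-1) - k)) + δ ∧
    (∑ k ∈ (Finset.range ((n-1)+1)).filter (fun k : ℕ => (k:ℝ) ∈ B),
        ((n-1).choose k : ℝ) * p ^ k * (1 - p) ^ ((n-1) - k))
      ≤ Real.exp ε * (∑ k ∈ (Finset.range (n+1)).filter (fun k : ℕ => (k:ℝ) ∈ B),
        (n.choose k : ℝ) * p ^ k * (1 - p) ^ (n - k)) + δ := by
  classical
  obtain ⟨q, hq⟩ : ∃ q, q = 1 - p := ⟨_, rfl⟩
  rw [show (1:ℝ) - p = q from hq.symm]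
  rw [show (1:ℝ) - p = q from hq.symm] at hlam2
  have hq0 : 0 < q := by rw [hq]; linarith
  have hn1 : 1 ≤ n := by omega
  have hn0 : (0:ℝ) < n := by exact_mod_cast Nat.pos_of_ne_zero (by omega)
  have hnn0 : (n:ℝ) ≠ 0 := ne_of_gt hn0
  have hpq1 : (n:ℝ) * p + (n:ℝ) * q = (n:ℝ) := by rw [hq]; ring
  obtain ⟨L, hL⟩ : ∃ L, L = Real.log (2 / δ) := ⟨_, rfl⟩
  rw [← hL] at hlam hε
  -- L > 0
  have hL0 : 0 < L := by
    by_contra h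
    push_neg at h
    have h2 : (n:ℝ) * L / 2 ≤ 0 := by
      apply div_nonpos_of_nonpos_of_nonneg _ (by norm_num)
      exact mul_nonpos_of_nonneg_of_nonpos hn0.le h
    rw [hlam, Real.sqrt_eq_zero'.mpr h2] at hlam0
    exact lt_irrefl 0 hlam0
  have hLlog2 : Real.log 2 ≤ L := by
    rw [hL]
    apply Real.log_le_log (by norm_num)
    rw [le_div_iff₀ hδ0]
    linarith
  have hlog2 : (0.6931471803 : ℝ) < Real.log 2 := Real.log_two_gt_d9
  -- s = lam / n
  obtain ⟨s, hs⟩ : ∃ s, s = lam / (n:ℝ) := ⟨_, rfl⟩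
  have hns : (n:ℝ) * s = lam := by rw [hs]; field_simp
  have hs0 : 0 < s := by rw [hs]; exact div_pos hlam0 hn0
  have hsp : s < p := by
    rw [hs, div_lt_iff₀ hn0, mul_comm]; exact hlam1
  have hsq : s < q := by
    rw [hs, div_lt_iff₀ hn0, mul_comm]; exact hlam2
  have hqs : 0 < q - s := by linarith
  have hps : 0 < p - s := by linarith
  -- lam^2 = n L / 2
  have hLnn : 0 ≤ (n:ℝ) * L / 2 := div_nonneg (mul_nonneg hn0.le hL0.le) (by norm_num)
  have hlamsq : lam ^ 2 = (n:ℝ) * L / 2 := by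
    rw [hlam, Real.sq_sqrt hLnn]
  have hnss : (n:ℝ) * s ^ 2 = L / 2 := by
    have h1 : ((n:ℝ) * s) ^ 2 = (n:ℝ) * L / 2 := by rw [hns]; exact hlamsq
    refine mul_left_cancel₀ hnn0 ?_
    calc (n:ℝ) * ((n:ℝ) * s ^ 2) = ((n:ℝ) * s) ^ 2 := by ring
      _ = (n:ℝ) * L / 2 := h1
      _ = (n:ℝ) * (L / 2) := by ring
  -- the sqrt in ε is s
  have hsqrt_s : Real.sqrt (L / (2 * (n:ℝ))) = s := by
    have h1 : L / (2 * (n:ℝ)) = s ^ 2 := by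
      have hLeq : L = 2 * ((n:ℝ) * s ^ 2) := by linarith
      rw [hLeq]
      field_simp
    rw [h1, Real.sqrt_sq hs0.le]
  rw [hsqrt_s, show (1:ℝ) - p = q from hq.symm] at hε
  -- epsilon lower bounds
  have hεkey : s / (q - s) ≤ ε := by
    rw [hε]
    by_cases hp2 : p ≤ 1 / 2
    · rw [if_pos hp2]
      have h1 : s * (1 / q - 1 / (s - p)) = s / q + s / (p - s) := by
        have e1 : q ≠ 0 := ne_of_gt hq0
        have e2 : s - p ≠ 0 := by intro h; linarith
        have e3 : p - s ≠ 0 := ne_of_gt hps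
        field_simp
        ring
      rw [h1]
      have h2 : s / (q - s) ≤ s / (p - s) := by
        apply div_le_div_of_nonneg_left hs0.le hps
        rw [hq]; linarith
      have h3 : 0 ≤ s / q := div_nonneg hs0.le hq0.le
      linarith
    · rw [if_neg hp2]
      have h1 : s * (1 / p - 1 / (s - q)) = s / p + s / (q - s) := by
        have e1 : p ≠ 0 := ne_of_gt hp0
        have e2 : s - q ≠ 0 := by intro h; linarith
        have e3 : q - s ≠ 0 := ne_of_gt hqs
        field_simp
        ring
      rw [h1]
      have h3 : 0 ≤ s / p := div_nonneg hs0.le hp0.le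
      linarith
  -- second key: p/(n q) + s/q ≤ s/(q-s)
  have hnq0 : 0 < (n:ℝ) * q := mul_pos hn0 hq0
  have hε2 : p / ((n:ℝ) * q) + s / q ≤ s / (q - s) := by
    have hpq' : p + q = 1 := by rw [hq]; ring
    have hsq2 : (p - q) ^ 2 = 1 - 4 * (p * q) := by
      linear_combination (p + q + 1) * hpq'
    have hpq4 : p * q ≤ 1 / 4 := by linarith [sq_nonneg (p - q)]
    have hcore : p * (q - s) ≤ (n:ℝ) * s ^ 2 := by
      have h1 : p * (q - s) < p * q := mul_lt_mul_of_pos_left (by linarith) hp0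
      have hL2 : 1 / 4 < L / 2 := by linarith
      linarith [hnss]
    have hstep : s / (q - s) - s / q = s ^ 2 / (q * (q - s)) := by
      have e1 : q ≠ 0 := ne_of_gt hq0
      have e2 : q - s ≠ 0 := ne_of_gt hqs
      field_simp
      ring
    have hstep2 : p / ((n:ℝ) * q) ≤ s ^ 2 / (q * (q - s)) := by
      rw [div_le_div_iff₀ hnq0 (mul_pos hq0 hqs)]
      calc p * (q * (q - s)) = q * (p * (q - s)) := by ring
        _ ≤ q * ((n:ℝ) * s ^ 2) := mul_le_mul_of_nonneg_left hcore hq0.le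
        _ = s ^ 2 * ((n:ℝ) * q) := by ring
    linarith
  -- exp bounds
  have hexp1 : q / (q - s) ≤ Real.exp ε := by
    have hpos : 0 < q / (q - s) := div_pos hq0 hqs
    have hlog := Real.log_le_sub_one_of_pos hpos
    have h1 : q / (q - s) - 1 = s / (q - s) := by field_simp; ring
    calc q / (q - s) = Real.exp (Real.log (q / (q - s))) := (Real.exp_log hpos).symm
      _ ≤ Real.exp ε := Real.exp_le_exp.mpr (by linarith [hεkey])
  have hexp2 : ((n:ℝ) * q + p + lam) / ((n:ℝ) * q) ≤ Real.exp ε := by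
    have hnum0 : 0 < (n:ℝ) * q + p + lam := by linarith
    have hpos : 0 < ((n:ℝ) * q + p + lam) / ((n:ℝ) * q) := div_pos hnum0 hnq0
    have hlog := Real.log_le_sub_one_of_pos hpos
    have h1 : ((n:ℝ) * q + p + lam) / ((n:ℝ) * q) - 1
        = p / ((n:ℝ) * q) + lam / ((n:ℝ) * q) := by
      field_simp
      ring
    have h2 : lam / ((n:ℝ) * q) = s / q := by
      rw [← hns, mul_div_mul_left _ _ hnn0]
    calc ((n:ℝ) * q + p + lam) / ((n:ℝ) * q)
        = Real.exp (Real.log (((n:ℝ) * q + p + lam) / ((n:ℝ) * q))) := (Real.exp_log hpos).symm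
      _ ≤ Real.exp ε := by
          apply Real.exp_le_exp.mpr
          rw [h1, h2] at hlog
          linarith [hε2, hεkey]
  -- k below the upper threshold is at most n-1
  have hklt : ∀ k : ℕ, (k:ℝ) ≤ (n:ℝ) * p + lam → k ≤ n - 1 := by
    intro k hk
    have h1 : (k:ℝ) < (n:ℝ) := by
      rw [← hns] at hk
      have h2 := mul_pos hn0 hqs
      have e : (n:ℝ) * (q - s) = (n:ℝ) * q - (n:ℝ) * s := by ring
      linarith [hpq1]
    have : k < n := by exact_mod_cast h1
    omega
  -- pointwise ratio bounds
  have hid : ∀ k : ℕ, k ≤ n - 1 →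
      ((n-1).choose k : ℝ) * (n:ℝ) = (n.choose k : ℝ) * ((n:ℝ) - (k:ℝ)) := by
    intro k hk
    have hkn : k ≤ n := by omega
    have h := Nat.choose_mul_succ_eq (n-1) k
    rw [Nat.sub_add_cancel hn1] at h
    have hcast := congrArg (fun x : ℕ => (x : ℝ)) h
    push_cast at hcast
    rw [Nat.cast_sub hkn] at hcast
    exact_mod_cast hcast
  have hpoint1 : ∀ k : ℕ, (k:ℝ) ≤ (n:ℝ) * p + lam →
      (n.choose k : ℝ) * p ^ k * q ^ (n - k)
        ≤ Real.exp ε * (((n-1).choose k : ℝ) * p ^ k * q ^ ((n-1) - k)) := by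
    intro k hk
    have hkn' : k ≤ n - 1 := hklt k hk
    have hid' := hid k hkn'
    have hk' : (k:ℝ) ≤ (n:ℝ) * p + (n:ℝ) * s := by rw [hns]; exact hk
    have hnk : (n:ℝ) * (q - s) ≤ (n:ℝ) - (k:ℝ) := by
      have h1 : (n:ℝ) * (q - s) = (n:ℝ) * q - (n:ℝ) * s := by ring
      linarith [hpq1]
    have hnk0 : 0 < (n:ℝ) - (k:ℝ) := lt_of_lt_of_le (mul_pos hn0 hqs) hnk
    have hpow : q ^ (n - k) = q ^ ((n-1) - k) * q := by
      rw [← pow_succ]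
      congr 1
      omega
    have hkey : (n.choose k : ℝ) * q ≤ Real.exp ε * ((n-1).choose k : ℝ) := by
      have hC0 : (0:ℝ) ≤ ((n-1).choose k : ℝ) := Nat.cast_nonneg _
      rw [← mul_le_mul_iff_left₀ hnk0]
      have hlhs : (n.choose k : ℝ) * q * ((n:ℝ) - (k:ℝ)) = ((n-1).choose k : ℝ) * (n:ℝ) * q := by
        linear_combination (-q) * hid'
      rw [hlhs]
      have h2 : (n:ℝ) * q ≤ Real.exp ε * ((n:ℝ) - (k:ℝ)) := by
        have h3 : q / (q - s) * ((n:ℝ) * (q - s)) = (n:ℝ) * q := by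
          field_simp
        have h4 : q / (q - s) * ((n:ℝ) * (q - s)) ≤ Real.exp ε * ((n:ℝ) - (k:ℝ)) :=
          mul_le_mul hexp1 hnk (mul_nonneg hn0.le hqs.le) (Real.exp_pos ε).le
        rw [h3] at h4
        exact h4
      calc ((n-1).choose k : ℝ) * (n:ℝ) * q = ((n-1).choose k : ℝ) * ((n:ℝ) * q) := by ring
        _ ≤ ((n-1).choose k : ℝ) * (Real.exp ε * ((n:ℝ) - (k:ℝ))) :=
            mul_le_mul_of_nonneg_left h2 hC0
        _ = Real.exp ε * ((n-1).choose k : ℝ) * ((n:ℝ) - (k:ℝ)) := by ring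
    calc (n.choose k : ℝ) * p ^ k * q ^ (n - k)
        = ((n.choose k : ℝ) * q) * (p ^ k * q ^ ((n-1) - k)) := by rw [hpow]; ring
      _ ≤ (Real.exp ε * ((n-1).choose k : ℝ)) * (p ^ k * q ^ ((n-1) - k)) := by
          apply mul_le_mul_of_nonneg_right hkey
          exact mul_nonneg (pow_nonneg hp0.le _) (pow_nonneg hq0.le _)
      _ = Real.exp ε * (((n-1).choose k : ℝ) * p ^ k * q ^ ((n-1) - k)) := by ring
  have hpoint2 : ∀ k : ℕ, k ≤ n - 1 → ((n:ℝ) - 1) * p - lam ≤ (k:ℝ) →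
      ((n-1).choose k : ℝ) * p ^ k * q ^ ((n-1) - k)
        ≤ Real.exp ε * ((n.choose k : ℝ) * p ^ k * q ^ (n - k)) := by
    intro k hkn' hk
    have hid' := hid k hkn'
    have hnk : (n:ℝ) - (k:ℝ) ≤ (n:ℝ) * q + p + lam := by
      have h1 : (n:ℝ) * q = (n:ℝ) - (n:ℝ) * p := by linarith [hpq1]
      have e : ((n:ℝ) - 1) * p = (n:ℝ) * p - p := by ring
      linarith [hk]
    have hpow : q ^ (n - k) = q ^ ((n-1) - k) * q := by
      rw [← pow_succ]
      congr 1
      omega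
    have hkey : ((n-1).choose k : ℝ) ≤ Real.exp ε * ((n.choose k : ℝ) * q) := by
      have hC0' : (0:ℝ) ≤ (n.choose k : ℝ) := Nat.cast_nonneg _
      rw [← mul_le_mul_iff_left₀ hn0]
      rw [hid']
      have h2 : (n:ℝ) - (k:ℝ) ≤ Real.exp ε * ((n:ℝ) * q) := by
        have h4 := mul_le_mul_of_nonneg_right hexp2 hnq0.le
        rw [div_mul_cancel₀ _ (ne_of_gt hnq0)] at h4
        linarith
      calc (n.choose k : ℝ) * ((n:ℝ) - (k:ℝ))
          ≤ (n.choose k : ℝ) * (Real.exp ε * ((n:ℝ) * q)) :=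
            mul_le_mul_of_nonneg_left h2 hC0'
        _ = Real.exp ε * ((n.choose k : ℝ) * q) * (n:ℝ) := by ring
    calc ((n-1).choose k : ℝ) * p ^ k * q ^ ((n-1) - k)
        = ((n-1).choose k : ℝ) * (p ^ k * q ^ ((n-1) - k)) := by ring
      _ ≤ (Real.exp ε * ((n.choose k : ℝ) * q)) * (p ^ k * q ^ ((n-1) - k)) := by
          apply mul_le_mul_of_nonneg_right hkey
          exact mul_nonneg (pow_nonneg hp0.le _) (pow_nonneg hq0.le _)
      _ = Real.exp ε * ((n.choose k : ℝ) * p ^ k * q ^ (n - k)) := by rw [hpow]; ring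
  -- tails
  have hhalf : Real.exp (-2 * lam ^ 2 / (n:ℝ)) = δ / 2 := by
    rw [hlamsq]
    have h1 : -2 * ((n:ℝ) * L / 2) / (n:ℝ) = -L := by field_simp
    rw [h1, hL, ← Real.log_inv, show (2 / δ)⁻¹ = δ / 2 by rw [inv_div], Real.exp_log (by linarith)]
  have hm1 : 1 ≤ n - 1 := by omega
  have hmr : ((n - 1 : ℕ):ℝ) = (n:ℝ) - 1 := by
    rw [Nat.cast_sub hn1]; norm_num
  have hm0 : (0:ℝ) < ((n - 1 : ℕ):ℝ) := by exact_mod_cast hm1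
  obtain ⟨lam', hlam'⟩ : ∃ x, x = Real.sqrt (((n - 1 : ℕ):ℝ) * L / 2) := ⟨_, rfl⟩
  have hlam'0 : 0 ≤ lam' := hlam' ▸ Real.sqrt_nonneg _
  have hlam'le : lam' ≤ lam := by
    rw [hlam', hlam]
    apply Real.sqrt_le_sqrt
    have h1 : ((n - 1 : ℕ):ℝ) ≤ (n:ℝ) := by exact_mod_cast Nat.sub_le n 1
    have := mul_le_mul_of_nonneg_right h1 hL0.le
    linarith
  have hlam'sq : lam' ^ 2 = ((n - 1 : ℕ):ℝ) * L / 2 := by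
    rw [hlam', Real.sq_sqrt (div_nonneg (mul_nonneg hm0.le hL0.le) (by norm_num))]
  have hhalf' : Real.exp (-2 * lam' ^ 2 / ((n - 1 : ℕ):ℝ)) = δ / 2 := by
    rw [hlam'sq]
    have h1 : -2 * (((n - 1 : ℕ):ℝ) * L / 2) / ((n - 1 : ℕ):ℝ) = -L := by
      have hne : ((n - 1 : ℕ):ℝ) ≠ 0 := ne_of_gt hm0
      rw [div_eq_iff hne]
      ring
    rw [h1, hL, ← Real.log_inv, show (2 / δ)⁻¹ = δ / 2 by rw [inv_div], Real.exp_log (by linarith)]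
  have htail1 : ∑ k ∈ (Finset.range (n+1)).filter (fun k : ℕ => (n:ℝ) * p + lam < (k:ℝ)),
      (n.choose k : ℝ) * p ^ k * q ^ (n - k) ≤ δ / 2 := by
    rw [← hhalf, hq]
    exact binom_tail_upper n (by omega) p lam hp0.le hp1.le hlam0.le
  have htail2 : ∑ k ∈ (Finset.range ((n-1)+1)).filter
        (fun k : ℕ => (k:ℝ) < ((n - 1 : ℕ):ℝ) * p - lam'),
      ((n-1).choose k : ℝ) * p ^ k * q ^ ((n-1) - k) ≤ δ / 2 := by
    rw [← hhalf', hq]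
    exact binom_tail_lower (n-1) hm1 p lam' hp0.le hp1.le hlam'0
  -- nonnegativity of terms
  have hPnn : ∀ (M k : ℕ), (0:ℝ) ≤ (M.choose k : ℝ) * p ^ k * q ^ (M - k) := by
    intro M k
    exact mul_nonneg (mul_nonneg (Nat.cast_nonneg _) (pow_nonneg hp0.le _))
      (pow_nonneg hq0.le _)
  set Fn := (Finset.range (n+1)).filter (fun k : ℕ => (k:ℝ) ∈ B) with hFn
  set Fm := (Finset.range ((n-1)+1)).filter (fun k : ℕ => (k:ℝ) ∈ B) with hFm
  constructor
  · -- direction 1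
    have hsplit := Finset.sum_filter_add_sum_filter_not Fn
      (fun k : ℕ => (k:ℝ) ≤ (n:ℝ) * p + lam) (fun k => (n.choose k : ℝ) * p ^ k * q ^ (n - k))
    have hgood : ∑ k ∈ Fn.filter (fun k : ℕ => (k:ℝ) ≤ (n:ℝ) * p + lam),
        (n.choose k : ℝ) * p ^ k * q ^ (n - k)
        ≤ Real.exp ε * ∑ k ∈ Fm, ((n-1).choose k : ℝ) * p ^ k * q ^ ((n-1) - k) := by
      calc ∑ k ∈ Fn.filter (fun k : ℕ => (k:ℝ) ≤ (n:ℝ) * p + lam),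
            (n.choose k : ℝ) * p ^ k * q ^ (n - k)
          ≤ ∑ k ∈ Fn.filter (fun k : ℕ => (k:ℝ) ≤ (n:ℝ) * p + lam),
            Real.exp ε * (((n-1).choose k : ℝ) * p ^ k * q ^ ((n-1) - k)) := by
            apply Finset.sum_le_sum
            intro k hk
            simp only [Finset.mem_filter] at hk
            exact hpoint1 k hk.2
        _ = Real.exp ε * ∑ k ∈ Fn.filter (fun k : ℕ => (k:ℝ) ≤ (n:ℝ) * p + lam),
            ((n-1).choose k : ℝ) * p ^ k * q ^ ((n-1) - k) := by rw [Finset.mul_sum]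
        _ ≤ Real.exp ε * ∑ k ∈ Fm, ((n-1).choose k : ℝ) * p ^ k * q ^ ((n-1) - k) := by
            apply mul_le_mul_of_nonneg_left _ (Real.exp_pos ε).le
            apply Finset.sum_le_sum_of_subset_of_nonneg
            · intro k hk
              simp only [Finset.mem_filter, hFn, hFm, Finset.mem_range] at hk ⊢
              obtain ⟨⟨hk1, hk2⟩, hk3⟩ := hk
              refine ⟨?_, hk2⟩
              have := hklt k hk3
              omega
            · intro k _ _
              exact hPnn _ _
    have hbad : ∑ k ∈ Fn.filter (fun k : ℕ => ¬ ((k:ℝ) ≤ (n:ℝ) * p + lam)),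
        (n.choose k : ℝ) * p ^ k * q ^ (n - k) ≤ δ / 2 := by
      refine le_trans (Finset.sum_le_sum_of_subset_of_nonneg ?_ ?_) htail1
      · intro k hk
        simp only [Finset.mem_filter, hFn, Finset.mem_range, not_le] at hk ⊢
        exact ⟨hk.1.1, hk.2⟩
      · intro k _ _
        exact hPnn _ _
    calc ∑ k ∈ Fn, (n.choose k : ℝ) * p ^ k * q ^ (n - k)
        = (∑ k ∈ Fn.filter (fun k : ℕ => (k:ℝ) ≤ (n:ℝ) * p + lam),
            (n.choose k : ℝ) * p ^ k * q ^ (n - k))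
          + ∑ k ∈ Fn.filter (fun k : ℕ => ¬ ((k:ℝ) ≤ (n:ℝ) * p + lam)),
            (n.choose k : ℝ) * p ^ k * q ^ (n - k) := hsplit.symm
      _ ≤ (Real.exp ε * ∑ k ∈ Fm, ((n-1).choose k : ℝ) * p ^ k * q ^ ((n-1) - k)) + δ / 2 :=
          add_le_add hgood hbad
      _ ≤ (Real.exp ε * ∑ k ∈ Fm, ((n-1).choose k : ℝ) * p ^ k * q ^ ((n-1) - k)) + δ :=
          add_le_add_right (by linarith) _
  · -- direction 2
    have hsplit := Finset.sum_filter_add_sum_filter_not Fm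
      (fun k : ℕ => (k:ℝ) < ((n - 1 : ℕ):ℝ) * p - lam')
      (fun k => ((n-1).choose k : ℝ) * p ^ k * q ^ ((n-1) - k))
    have hgood : ∑ k ∈ Fm.filter (fun k : ℕ => ¬ ((k:ℝ) < ((n - 1 : ℕ):ℝ) * p - lam')),
        ((n-1).choose k : ℝ) * p ^ k * q ^ ((n-1) - k)
        ≤ Real.exp ε * ∑ k ∈ Fn, (n.choose k : ℝ) * p ^ k * q ^ (n - k) := by
      calc ∑ k ∈ Fm.filter (fun k : ℕ => ¬ ((k:ℝ) < ((n - 1 : ℕ):ℝ) * p - lam')),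
            ((n-1).choose k : ℝ) * p ^ k * q ^ ((n-1) - k)
          ≤ ∑ k ∈ Fm.filter (fun k : ℕ => ¬ ((k:ℝ) < ((n - 1 : ℕ):ℝ) * p - lam')),
            Real.exp ε * ((n.choose k : ℝ) * p ^ k * q ^ (n - k)) := by
            apply Finset.sum_le_sum
            intro k hk
            simp only [Finset.mem_filter, not_lt, hFm, Finset.mem_range] at hk
            obtain ⟨⟨hk1, hk2⟩, hk3⟩ := hk
            apply hpoint2 k (by omega)
            rw [← hmr]
            linarith
        _ = Real.exp ε * ∑ k ∈ Fm.filter (fun k : ℕ => ¬ ((k:ℝ) < ((n - 1 : ℕ):ℝ) * p - lam')),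
            (n.choose k : ℝ) * p ^ k * q ^ (n - k) := by rw [Finset.mul_sum]
        _ ≤ Real.exp ε * ∑ k ∈ Fn, (n.choose k : ℝ) * p ^ k * q ^ (n - k) := by
            apply mul_le_mul_of_nonneg_left _ (Real.exp_pos ε).le
            apply Finset.sum_le_sum_of_subset_of_nonneg
            · intro k hk
              simp only [Finset.mem_filter, hFn, hFm, Finset.mem_range] at hk ⊢
              obtain ⟨⟨hk1, hk2⟩, hk3⟩ := hk
              exact ⟨by omega, hk2⟩
            · intro k _ _
              exact hPnn _ _
    have hbad : ∑ k ∈ Fm.filter (fun k : ℕ => (k:ℝ) < ((n - 1 : ℕ):ℝ) * p - lam'),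
        ((n-1).choose k : ℝ) * p ^ k * q ^ ((n-1) - k) ≤ δ / 2 := by
      refine le_trans (Finset.sum_le_sum_of_subset_of_nonneg ?_ ?_) htail2
      · intro k hk
        simp only [Finset.mem_filter, hFm, Finset.mem_range] at hk ⊢
        exact ⟨hk.1.1, hk.2⟩
      · intro k _ _
        exact hPnn _ _
    calc ∑ k ∈ Fm, ((n-1).choose k : ℝ) * p ^ k * q ^ ((n-1) - k)
        = (∑ k ∈ Fm.filter (fun k : ℕ => (k:ℝ) < ((n - 1 : ℕ):ℝ) * p - lam'),
            ((n-1).choose k : ℝ) * p ^ k * q ^ ((n-1) - k))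
          + ∑ k ∈ Fm.filter (fun k : ℕ => ¬ ((k:ℝ) < ((n - 1 : ℕ):ℝ) * p - lam')),
            ((n-1).choose k : ℝ) * p ^ k * q ^ ((n-1) - k) := hsplit.symm
      _ ≤ δ / 2 + (Real.exp ε * ∑ k ∈ Fn, (n.choose k : ℝ) * p ^ k * q ^ (n - k)) :=
          add_le_add hbad hgood
      _ = (Real.exp ε * ∑ k ∈ Fn, (n.choose k : ℝ) * p ^ k * q ^ (n - k)) + δ / 2 := by
          ring
      _ ≤ (Real.exp ε * ∑ k ∈ Fn, (n.choose k : ℝ) * p ^ k * q ^ (n - k)) + δ :=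
          add_le_add_right (by linarith) _

/-- Noiseless privacy of the sum of i.i.d. Bernoulli(p) variables, for fixed `δ`:
for every index `j` and every (measurable) set `B`, the probability that the full sum lies
in `B` is at most `e^ε` times the probability that the sum with coordinate `j` removed lies
in `B`, plus `δ`, and symmetrically. -/
theorem bernoulli_sum_noiseless_privacy_fixed_delta
    {Ω : Type*} [MeasurableSpace Ω] (μ : Measure Ω) [IsProbabilityMeasure μ]
    (n : ℕ) (hn : 1 ≤ n) (p : ℝ) (hp0 : 0 < p) (hp1 : p < 1)
    (X : Fin n → Ω → ℝ) (hXmeas : ∀ i, Measurable (X i))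
    (hindep : iIndepFun X μ)
    (hBern1 : ∀ i, μ {ω | X i ω = 1} = ENNReal.ofReal p)
    (hBern0 : ∀ i, μ {ω | X i ω = 0} = ENNReal.ofReal (1 - p))
    (δ : ℝ) (hδ : (1 - p) ^ n + p ^ n ≤ δ)
    (lam : ℝ) (hlam : lam = Real.sqrt ((n : ℝ) * Real.log (2 / δ) / 2))
    (hlam0 : 0 < lam) (hlam1 : lam < (n : ℝ) * p) (hlam2 : lam < (n : ℝ) * (1 - p))
    (ε : ℝ)
    (hε : ε = if p ≤ 1 / 2 then
        Real.sqrt (Real.log (2 / δ) / (2 * (n : ℝ))) *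
          (1 / (1 - p) - 1 / (Real.sqrt (Real.log (2 / δ) / (2 * (n : ℝ))) - p))
      else
        Real.sqrt (Real.log (2 / δ) / (2 * (n : ℝ))) *
          (1 / p - 1 / (Real.sqrt (Real.log (2 / δ) / (2 * (n : ℝ))) - (1 - p)))) :
    ∀ j : Fin n, ∀ B : Set ℝ, MeasurableSet B →
      (μ {ω | (∑ i, X i ω) ∈ B}).toReal
          ≤ Real.exp ε * (μ {ω | (∑ i ∈ Finset.univ.erase j, X i ω) ∈ B}).toReal + δ ∧
      (μ {ω | (∑ i ∈ Finset.univ.erase j, X i ω) ∈ B}).toReal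
          ≤ Real.exp ε * (μ {ω | (∑ i, X i ω) ∈ B}).toReal + δ := by
  intro j B hB
  classical
  have hδ0 : 0 < δ :=
    lt_of_lt_of_le (add_pos (pow_pos (by linarith) n) (pow_pos hp0 n)) hδ
  by_cases hδ1 : 1 ≤ δ
  · have htriv : ∀ S T : Set Ω, (μ S).toReal ≤ Real.exp ε * (μ T).toReal + δ := by
      intro S T
      have h1 : (μ S).toReal ≤ 1 := by
        rw [← ENNReal.toReal_one]
        exact ENNReal.toReal_mono ENNReal.one_ne_top prob_le_one
      have h2 : 0 ≤ Real.exp ε * (μ T).toReal :=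
        mul_nonneg (Real.exp_pos ε).le ENNReal.toReal_nonneg
      linarith
    exact ⟨htriv _ _, htriv _ _⟩
  · push_neg at hδ1
    have hn2 : 2 ≤ n := by
      by_contra h
      have hn1 : n = 1 := by omega
      subst hn1
      simp only [pow_one] at hδ
      linarith
    have hcard_univ : (Finset.univ : Finset (Fin n)).card = n := by simp
    have hcard_erase : ((Finset.univ : Finset (Fin n)).erase j).card = n - 1 := by
      rw [Finset.card_erase_of_mem (Finset.mem_univ j), hcard_univ]
    have hev1 := event_measure μ X hp0 hp1 hXmeas hindep hBern1 hBern0 Finset.univ B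
    have hev2 := event_measure μ X hp0 hp1 hXmeas hindep hBern1 hBern0
      (Finset.univ.erase j) B
    rw [hcard_univ] at hev1
    rw [hcard_erase] at hev2
    have hnn : ∀ (M : ℕ) (F : Finset ℕ), ∀ k ∈ F,
        (0:ℝ) ≤ (M.choose k : ℝ) * p ^ k * (1 - p) ^ (M - k) := by
      intro M F k _
      exact mul_nonneg (mul_nonneg (Nat.cast_nonneg _) (pow_nonneg hp0.le _))
        (pow_nonneg (by linarith) _)
    rw [hev1, hev2,
      ← ENNReal.ofReal_sum_of_nonneg (hnn n _),
      ← ENNReal.ofReal_sum_of_nonneg (hnn (n-1) _),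
      ENNReal.toReal_ofReal (Finset.sum_nonneg (hnn n _)),
      ENNReal.toReal_ofReal (Finset.sum_nonneg (hnn (n-1) _))]
    exact main_real n hn2 p δ lam ε hp0 hp1 hδ0 hδ1 hlam hlam0 hlam1 hlam2 hε B
end

section
/- Let X₁,…,Xₙ be i.i.d. Bernoulli(p) random variables and let M(X) = Σ_{i=1}^n X_i. Fix ε > 0 and define δ = 2·exp(−2np²·((e^ε − 1)/(e^ε + p/(1−p)))²) if p ≤ 1/2, and δ = 2·exp(−2n(1−p)²·((e^ε − 1)/(e^ε + (1−p)/p))²) if p > 1/2. Then for every index j ≤ n and every set B of integers, P(Σ_{i=1}^n X_i ∈ B) ≤ e^ε · P(Σ_{i≠j} X_i ∈ B) + δ and P(Σ_{i≠j} X_i ∈ B) ≤ e^ε · P(Σ_{i=1}^n X_i ∈ B) + δ; that is, the sum mechanism on this data is (ε,δ)-noiseless private. -/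
open MeasureTheory ProbabilityTheory

open Finset Real


/-- Hoeffding's lemma for a Bernoulli(p) variable, for nonnegative `t`. -/
lemma bern_hoeffding {p : ℝ} (hp0 : 0 ≤ p) (hp1 : p ≤ 1) {t : ℝ} (ht : 0 ≤ t) :
    (1 - p) + p * Real.exp t ≤ Real.exp (p * t + t ^ 2 / 8) := by
  set q : ℝ := 1 - p with hq
  have hden : ∀ x : ℝ, 0 < q + p * Real.exp x := by
    intro x
    rcases eq_or_lt_of_le hp0 with h | h
    · simp [← h, hq]
    · have := Real.exp_pos x
      nlinarith
  set f : ℝ → ℝ := fun x => p * x + x ^ 2 / 8 - Real.log (q + p * Real.exp x) with hf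
  set g : ℝ → ℝ := fun x => p + x / 4 - p * Real.exp x / (q + p * Real.exp x) with hg
  have hder_f : ∀ x : ℝ, HasDerivAt f (g x) x := by
    intro x
    have h1 : HasDerivAt (fun x : ℝ => q + p * Real.exp x) (p * Real.exp x) x :=
      ((Real.hasDerivAt_exp x).const_mul p).const_add q
    have h2 : HasDerivAt (fun x : ℝ => Real.log (q + p * Real.exp x))
        (p * Real.exp x / (q + p * Real.exp x)) x := h1.log (hden x).ne'
    have h3 : HasDerivAt (fun x : ℝ => p * x + x ^ 2 / 8) (p + x / 4) x := by
      have h4 : HasDerivAt (fun x : ℝ => x ^ 2) (2 * x) x := by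
        simpa using hasDerivAt_pow 2 x
      have h5 : HasDerivAt (fun x : ℝ => p * x) p x := by
        simpa using (hasDerivAt_id x).const_mul p
      have := h5.add (h4.div_const 8)
      exact this.congr_deriv (by ring)
    exact h3.sub h2
  have hder_g : ∀ x : ℝ, HasDerivAt g
      (1 / 4 - p * Real.exp x * q / (q + p * Real.exp x) ^ 2) x := by
    intro x
    have hu : HasDerivAt (fun x : ℝ => p * Real.exp x) (p * Real.exp x) x :=
      (Real.hasDerivAt_exp x).const_mul p
    have hv : HasDerivAt (fun x : ℝ => q + p * Real.exp x) (p * Real.exp x) x :=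
      ((Real.hasDerivAt_exp x).const_mul p).const_add q
    have hdiv : HasDerivAt (fun x : ℝ => p * Real.exp x / (q + p * Real.exp x))
        ((p * Real.exp x * (q + p * Real.exp x) - p * Real.exp x * (p * Real.exp x)) /
          (q + p * Real.exp x) ^ 2) x := hu.div hv (hden x).ne'
    have h3 : HasDerivAt (fun x : ℝ => p + x / 4) (1 / 4) x := by
      simpa using ((hasDerivAt_id x).div_const 4).const_add p
    have := h3.sub hdiv
    exact this.congr_deriv (by ring)
  have hg_nonneg : ∀ x : ℝ, 0 ≤ x → 0 ≤ g x := by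
    have hmono : MonotoneOn g (Set.Ici (0 : ℝ)) := by
      apply monotoneOn_of_deriv_nonneg (convex_Ici 0)
      · exact fun x _ => (hder_g x).continuousAt.continuousWithinAt
      · exact fun x _ => (hder_g x).differentiableAt.differentiableWithinAt
      · intro x _
        rw [(hder_g x).deriv]
        have h1 : 0 < q + p * Real.exp x := hden x
        have h2 : 0 ≤ p * Real.exp x := mul_nonneg hp0 (Real.exp_pos x).le
        have h3 : p * Real.exp x * q * 4 ≤ (q + p * Real.exp x) ^ 2 := by
          nlinarith [sq_nonneg (q - p * Real.exp x)]
        have h4 : p * Real.exp x * q / (q + p * Real.exp x) ^ 2 ≤ 1 / 4 := by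
          rw [div_le_div_iff₀ (by positivity) (by norm_num)]
          linarith
        linarith
    intro x hx
    have h0 : g 0 = 0 := by
      simp [hg, hq]
    have := hmono (Set.self_mem_Ici) (Set.mem_Ici.2 hx) hx
    rw [h0] at this
    exact this
  have hf_nonneg : 0 ≤ f t := by
    have hmono : MonotoneOn f (Set.Ici (0 : ℝ)) := by
      apply monotoneOn_of_deriv_nonneg (convex_Ici 0)
      · exact fun x _ => (hder_f x).continuousAt.continuousWithinAt
      · exact fun x _ => (hder_f x).differentiableAt.differentiableWithinAt
      · intro x hx
        rw [(hder_f x).deriv]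
        exact hg_nonneg x (le_of_lt (by simpa using hx))
    have h0 : f 0 = 0 := by
      simp [hf, hq]
    have := hmono (Set.self_mem_Ici) (Set.mem_Ici.2 ht) ht
    rw [h0] at this
    exact this
  have hlog : Real.log (q + p * Real.exp t) ≤ p * t + t ^ 2 / 8 := by
    have := hf_nonneg
    simp only [hf] at this
    linarith
  calc q + p * Real.exp t = Real.exp (Real.log (q + p * Real.exp t)) :=
        (Real.exp_log (hden t)).symm
    _ ≤ Real.exp (p * t + t ^ 2 / 8) := Real.exp_le_exp.2 hlog


/-- binomial weight -/
noncomputable def binw (p : ℝ) (m k : ℕ) : ℝ := (m.choose k : ℝ) * p ^ k * (1 - p) ^ (m - k)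

lemma binw_nonneg {p : ℝ} (hp0 : 0 ≤ p) (hp1 : p ≤ 1) (m k : ℕ) : 0 ≤ binw p m k := by
  have : (0:ℝ) ≤ 1 - p := by linarith
  unfold binw; positivity

lemma binw_sum_exp (p : ℝ) (m : ℕ) (l : ℝ) :
    ∑ k ∈ range (m + 1), binw p m k * Real.exp (l * k)
      = ((1 - p) + p * Real.exp l) ^ m := by
  rw [add_comm (1-p), add_pow]
  apply Finset.sum_congr rfl
  intro k _
  rw [mul_pow, ← Real.exp_nat_mul]
  unfold binw
  rw [mul_comm l (k:ℝ)]
  ring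

lemma binw_sum_one {p : ℝ} (m : ℕ) : ∑ k ∈ range (m + 1), binw p m k = 1 := by
  have := binw_sum_exp p m 0
  simpa using this

lemma binom_upper_tail {p : ℝ} (hp0 : 0 ≤ p) (hp1 : p ≤ 1) {m : ℕ} (hm : 1 ≤ m)
    {c : ℝ} (hc : (m : ℝ) * p ≤ c) :
    ∑ k ∈ range (m + 1), (if c ≤ (k : ℝ) then binw p m k else 0)
      ≤ Real.exp (-2 * (c - m * p) ^ 2 / m) := by
  set d : ℝ := c - m * p with hd
  have hd0 : 0 ≤ d := by simp [hd]; linarith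
  have hm0 : (0:ℝ) < m := by exact_mod_cast hm
  set l : ℝ := 4 * d / m with hl
  have hl0 : 0 ≤ l := by positivity
  have step1 : ∑ k ∈ range (m + 1), (if c ≤ (k : ℝ) then binw p m k else 0)
      ≤ ∑ k ∈ range (m + 1), binw p m k * Real.exp (l * (k - c)) := by
    apply Finset.sum_le_sum
    intro k _
    by_cases h : c ≤ (k:ℝ)
    · rw [if_pos h]
      nth_rewrite 1 [← mul_one (binw p m k)]
      apply mul_le_mul_of_nonneg_left _ (binw_nonneg hp0 hp1 m k)
      rw [← Real.exp_zero]
      apply Real.exp_le_exp.2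
      have : 0 ≤ (k:ℝ) - c := by linarith
      positivity
    · rw [if_neg h]
      exact mul_nonneg (binw_nonneg hp0 hp1 m k) (Real.exp_pos _).le
  have step2 : ∑ k ∈ range (m + 1), binw p m k * Real.exp (l * (k - c))
      = Real.exp (-(l*c)) * ((1 - p) + p * Real.exp l) ^ m := by
    rw [← binw_sum_exp p m l, Finset.mul_sum]
    apply Finset.sum_congr rfl
    intro k _
    rw [show l * ((k:ℝ) - c) = l * k + -(l * c) by ring, Real.exp_add]
    ring
  have step3 : ((1 - p) + p * Real.exp l) ^ m ≤ Real.exp (m * (p * l + l ^ 2 / 8)) := by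
    calc ((1 - p) + p * Real.exp l) ^ m
        ≤ (Real.exp (p * l + l ^ 2 / 8)) ^ m := by
          apply pow_le_pow_left₀ _ (bern_hoeffding hp0 hp1 hl0)
          have := Real.exp_pos l
          nlinarith [Real.add_one_le_exp l]
      _ = Real.exp (m * (p * l + l ^ 2 / 8)) := by rw [← Real.exp_nat_mul]
  calc ∑ k ∈ range (m + 1), (if c ≤ (k : ℝ) then binw p m k else 0)
      ≤ Real.exp (-(l*c)) * ((1 - p) + p * Real.exp l) ^ m := by rw [← step2]; exact step1
    _ ≤ Real.exp (-(l*c)) * Real.exp (m * (p * l + l ^ 2 / 8)) := by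
        apply mul_le_mul_of_nonneg_left step3 (Real.exp_pos _).le
    _ = Real.exp (-(l*c) + m * (p * l + l ^ 2 / 8)) := by rw [← Real.exp_add]
    _ = Real.exp (-2 * d ^ 2 / m) := by
        congr 1
        have hc' : c = d + m * p := by rw [hd]; ring
        rw [hl, hc']
        field_simp
        ring

lemma binom_lower_tail {p : ℝ} (hp0 : 0 ≤ p) (hp1 : p ≤ 1) {m : ℕ} (hm : 1 ≤ m)
    {c : ℝ} (hc : c ≤ (m : ℝ) * p) :
    ∑ k ∈ range (m + 1), (if (k : ℝ) ≤ c then binw p m k else 0)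
      ≤ Real.exp (-2 * ((m : ℝ) * p - c) ^ 2 / m) := by
  have key : ∑ k ∈ range (m + 1), (if (k : ℝ) ≤ c then binw p m k else 0)
      = ∑ k ∈ range (m + 1), (if (m : ℝ) - c ≤ (k : ℝ) then binw (1 - p) m k else 0) := by
    rw [← Finset.sum_range_reflect]
    apply Finset.sum_congr rfl
    intro k hk
    have hk' : k ≤ m := by
      have := Finset.mem_range.1 hk
      omega
    have h1 : m + 1 - 1 - k = m - k := by omega
    rw [h1]
    have hcast : ((m - k : ℕ) : ℝ) = (m : ℝ) - k := by
      push_cast [hk']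
      ring
    rw [if_congr (show ((m - k : ℕ) : ℝ) ≤ c ↔ (m : ℝ) - c ≤ (k:ℝ) by rw [hcast]; exact ⟨fun h => by linarith, fun h => by linarith⟩) rfl rfl]
    congr 1
    unfold binw
    rw [Nat.choose_symm hk']
    have h2 : m - (m - k) = k := by omega
    rw [h2]
    ring_nf
  rw [key]
  have h1p : (0:ℝ) ≤ 1 - p := by linarith
  have h1p' : 1 - p ≤ 1 := by linarith
  have hc' : (m : ℝ) * (1 - p) ≤ (m : ℝ) - c := by
    have : (0:ℝ) ≤ m := by positivity
    nlinarith
  have hb := binom_upper_tail h1p h1p' hm hc'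
  have heq : -2 * ((m:ℝ) * p - c) ^ 2 / m = -2 * (((m:ℝ) - c) - m * (1 - p)) ^ 2 / m := by ring
  rw [heq]
  exact hb

lemma nat_choose_aux1 {n k : ℕ} (hk : k < n) :
    (n : ℝ) * ((n-1).choose k : ℝ) = (n.choose k : ℝ) * ((n : ℝ) - k) := by
  obtain ⟨m, rfl⟩ : ∃ m, n = m + 1 := ⟨n - 1, by omega⟩
  have hkm : k ≤ m := by omega
  have hnat : (m+1) * (m.choose k) = (m+1).choose k * (m + 1 - k) := by
    have h1 := Nat.add_one_mul_choose_eq m k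
    have h2 := Nat.choose_succ_right_eq (m+1) k
    exact h1.trans h2
  have hcast : ((m + 1 - k : ℕ) : ℝ) = ((m+1 : ℕ) : ℝ) - k := by
    push_cast [show k ≤ m + 1 by omega]
    ring
  calc ((m+1 : ℕ) : ℝ) * ((m+1-1).choose k : ℝ) = (((m+1) * (m.choose k) : ℕ) : ℝ) := by
        push_cast; ring_nf
    _ = ((((m+1).choose k) * (m + 1 - k) : ℕ) : ℝ) := by rw [hnat]
    _ = ((m+1 : ℕ).choose k : ℝ) * (((m+1 : ℕ)) : ℝ) - ((m+1 : ℕ).choose k : ℝ) * k := by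
        push_cast [show k ≤ m + 1 by omega]; ring
    _ = ((m+1 : ℕ).choose k : ℝ) * (((m+1 : ℕ) : ℝ) - k) := by ring

lemma nat_choose_aux2 {n j : ℕ} (hn : 1 ≤ n) :
    (n : ℝ) * ((n-1).choose j : ℝ) = ((j : ℝ) + 1) * (n.choose (j+1) : ℝ) := by
  obtain ⟨m, rfl⟩ : ∃ m, n = m + 1 := ⟨n - 1, by omega⟩
  have h1 := Nat.add_one_mul_choose_eq m j
  have : (m+1) * (m.choose j) = (m+1).choose (j+1) * (j+1) := h1
  calc ((m+1 : ℕ) : ℝ) * ((m+1-1).choose j : ℝ) = (((m+1) * (m.choose j) : ℕ) : ℝ) := by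
        push_cast; ring_nf
    _ = ((((m+1).choose (j+1)) * (j+1) : ℕ) : ℝ) := by rw [this]
    _ = ((j : ℝ) + 1) * ((m+1 : ℕ).choose (j+1) : ℝ) := by push_cast; ring

/-- comparison of exp tails -/
lemma tail_le_delta {n : ℕ} {x y : ℝ} (hx : 0 ≤ x) (hxy : x ≤ y) :
    Real.exp (-2 * (n:ℝ) * y ^ 2) ≤ 2 * Real.exp (-2 * (n:ℝ) * x ^ 2) := by
  have h1 : x ^ 2 ≤ y ^ 2 := by nlinarith
  have hn0 : (0:ℝ) ≤ n := Nat.cast_nonneg n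
  have h2 : -2 * (n:ℝ) * y ^ 2 ≤ -2 * (n:ℝ) * x ^ 2 := by nlinarith
  have := Real.exp_le_exp.2 h2
  linarith [Real.exp_pos (-2 * (n:ℝ) * x ^ 2)]

lemma coreA {p ε : ℝ} (hp0 : 0 < p) (hp12 : p ≤ 1/2) (hε : 0 < ε) {n : ℕ} (hn : 1 ≤ n)
    (G : ℕ → Prop) [DecidablePred G] :
    ∑ k ∈ range (n+1), (if G k then binw p n k else 0)
      ≤ Real.exp ε * (∑ k ∈ range n, (if G k then binw p (n-1) k else 0))
        + 2 * Real.exp (-2 * (n:ℝ) * p^2 *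
            (((1-p) * (Real.exp ε - 1)) / (1 + (1-p) * (Real.exp ε - 1)))^2) := by
  classical
  set q : ℝ := 1 - p with hq
  have hq0 : 0 < q := by rw [hq]; linarith
  have hp1 : p < 1 := by linarith
  set E : ℝ := Real.exp ε with hE
  have hE0 : 0 < E := Real.exp_pos ε
  have hE1 : 1 < E := by rw [hE, ← Real.exp_zero]; exact Real.exp_lt_exp.2 hε
  set a : ℝ := q * (E - 1) with ha
  have ha0 : 0 < a := by apply mul_pos hq0; linarith
  have hn0 : (0:ℝ) < n := by exact_mod_cast hn
  clear_value q E a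
  set c₁ : ℝ := (n:ℝ) - (n:ℝ) * q / E with hc₁
  clear_value c₁
  -- split the sum
  have hsplit : ∑ k ∈ range (n+1), (if G k then binw p n k else 0)
      = (∑ k ∈ range (n+1), (if G k ∧ (n:ℝ) * q ≤ E * ((n:ℝ) - k) then binw p n k else 0))
        + (∑ k ∈ range (n+1), (if G k ∧ ¬ ((n:ℝ) * q ≤ E * ((n:ℝ) - k)) then binw p n k else 0)) := by
    rw [← Finset.sum_add_distrib]
    apply Finset.sum_congr rfl
    intro k _
    by_cases h1 : G k
    · by_cases h2 : (n:ℝ) * q ≤ E * ((n:ℝ) - k) <;> simp [h1, h2]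
    · simp [h1]
  rw [hsplit]
  have hgood : ∑ k ∈ range (n+1), (if G k ∧ (n:ℝ) * q ≤ E * ((n:ℝ) - k) then binw p n k else 0)
      ≤ E * (∑ k ∈ range n, (if G k then binw p (n-1) k else 0)) := by
    have h1 : ∑ k ∈ range (n+1), (if G k ∧ (n:ℝ) * q ≤ E * ((n:ℝ) - k) then binw p n k else 0)
        ≤ ∑ k ∈ range (n+1), (if G k then E * binw p (n-1) k else 0) := by
      apply Finset.sum_le_sum
      intro k _
      by_cases h : G k ∧ (n:ℝ) * q ≤ E * ((n:ℝ) - k)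
      · rw [if_pos h, if_pos h.1]
        obtain ⟨hGk, hgd⟩ := h
        have hkn : (k:ℝ) < n := by nlinarith
        have hkn' : k < n := by exact_mod_cast hkn
        have hC0 : (0:ℝ) ≤ (n.choose k : ℝ) := Nat.cast_nonneg _
        have haux := nat_choose_aux1 hkn'
        -- binw p n k = choose n k * p^k * q^(n-k), n-k = (n-1-k)+1
        have hnk : n - k = (n - 1 - k) + 1 := by omega
        unfold binw
        rw [hnk, pow_succ]
        rw [show n - 1 - k = (n-1) - k from by omega]
        have hkey : (n.choose k : ℝ) * q ≤ E * ((n-1).choose k : ℝ) := by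
          have h5 : (n.choose k : ℝ) * ((n:ℝ) * q) ≤ (n.choose k : ℝ) * (E * ((n:ℝ) - k)) :=
            mul_le_mul_of_nonneg_left hgd hC0
          have h6 : (n:ℝ) * ((n.choose k : ℝ) * q) ≤ (n:ℝ) * (E * ((n-1).choose k : ℝ)) := by
            calc (n:ℝ) * ((n.choose k : ℝ) * q) = (n.choose k : ℝ) * ((n:ℝ) * q) := by ring
              _ ≤ (n.choose k : ℝ) * (E * ((n:ℝ) - k)) := h5
              _ = E * ((n.choose k : ℝ) * ((n:ℝ) - k)) := by ring
              _ = E * ((n:ℝ) * ((n-1).choose k : ℝ)) := by rw [← haux]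
              _ = (n:ℝ) * (E * ((n-1).choose k : ℝ)) := by ring
          exact le_of_mul_le_mul_left h6 hn0
        have hpk : (0:ℝ) ≤ p ^ k * (1-p) ^ ((n-1) - k) := mul_nonneg (pow_nonneg hp0.le k) (pow_nonneg (by linarith) _)
        calc (n.choose k : ℝ) * p ^ k * ((1-p) ^ ((n-1) - k) * (1-p))
            = ((n.choose k : ℝ) * q) * (p ^ k * (1-p) ^ ((n-1) - k)) := by rw [hq]; ring
          _ ≤ (E * ((n-1).choose k : ℝ)) * (p ^ k * (1-p) ^ ((n-1) - k)) :=
              mul_le_mul_of_nonneg_right hkey hpk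
          _ = E * (((n-1).choose k : ℝ) * p ^ k * (1-p) ^ ((n-1) - k)) := by ring
      · rw [if_neg h]
        by_cases h2 : G k
        · rw [if_pos h2]
          exact mul_nonneg hE0.le (binw_nonneg (by linarith) (by linarith) _ _)
        · rw [if_neg h2]
    have h2 : ∑ k ∈ range (n+1), (if G k then E * binw p (n-1) k else 0)
        = E * ∑ k ∈ range n, (if G k then binw p (n-1) k else 0) := by
      rw [Finset.sum_range_succ]
      have hlast : binw p (n-1) n = 0 := by
        unfold binw
        rw [Nat.choose_eq_zero_of_lt (by omega)]
        simp
      rw [hlast]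
      simp only [mul_zero, ite_self, add_zero]
      rw [Finset.mul_sum]
      apply Finset.sum_congr rfl
      intro k _
      by_cases h3 : G k <;> simp [h3]
    rw [h2] at h1
    exact h1
  have hbad : ∑ k ∈ range (n+1), (if G k ∧ ¬ ((n:ℝ) * q ≤ E * ((n:ℝ) - k)) then binw p n k else 0)
      ≤ 2 * Real.exp (-2 * (n:ℝ) * p^2 * (a / (1 + a))^2) := by
    have h1 : ∑ k ∈ range (n+1), (if G k ∧ ¬ ((n:ℝ) * q ≤ E * ((n:ℝ) - k)) then binw p n k else 0)
        ≤ ∑ k ∈ range (n+1), (if c₁ ≤ (k:ℝ) then binw p n k else 0) := by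
      apply Finset.sum_le_sum
      intro k _
      by_cases h : G k ∧ ¬ ((n:ℝ) * q ≤ E * ((n:ℝ) - k))
      · rw [if_pos h]
        have hlt : E * ((n:ℝ) - k) < (n:ℝ) * q := lt_of_not_ge h.2
        have hck : c₁ ≤ (k:ℝ) := by
          rw [hc₁]
          have hd : (n:ℝ) - (k:ℝ) < (n:ℝ) * q / E := by
            rw [lt_div_iff₀ hE0]
            nlinarith
          linarith
        rw [if_pos hck]
      · rw [if_neg h]
        by_cases h2 : c₁ ≤ (k:ℝ)
        · rw [if_pos h2]; exact binw_nonneg (by linarith) (by linarith) _ _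
        · rw [if_neg h2]
    have hc : (n:ℝ) * p ≤ c₁ := by
      rw [hc₁]
      have : (n:ℝ) * q / E ≤ (n:ℝ) * q := by
        rw [div_le_iff₀ hE0]
        nlinarith
      have hpq : (n:ℝ) * p = (n:ℝ) - (n:ℝ) * q := by rw [hq]; ring
      linarith
    have h2 := binom_upper_tail (le_of_lt hp0) (by linarith) hn hc
    have hrate : c₁ - (n:ℝ) * p = (n:ℝ) * (q * (1 - 1/E)) := by
      rw [hc₁, hq]
      field_simp
      try ring
    have hexp : -2 * (c₁ - (n:ℝ)*p)^2 / n = -2 * (n:ℝ) * (q * (1 - 1/E))^2 := by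
      rw [hrate]
      field_simp
      try ring
    rw [hexp] at h2
    have hkey : p * (a / (1+a)) ≤ q * (1 - 1/E) := by
      have h1a : (0:ℝ) < 1 + a := by linarith
      have e1 : p * (a / (1+a)) = (p * a) / (1+a) := by ring
      have e2 : q * (1 - 1/E) = (q * (E-1)) / E := by
        rw [one_sub_div hE0.ne', mul_div_assoc]
      rw [e1, e2, div_le_div_iff₀ h1a hE0]
      have expand : q*(E-1)*(1+a) - p*a*E = q*(E-1)*(p + q*E - p*E) := by
        rw [ha, hq]; ring
      have hqp : 0 ≤ q - p := by rw [hq]; linarith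
      have hqpE : 0 ≤ (q - p) * E := mul_nonneg hqp hE0.le
      have hpr : 0 ≤ q * (E - 1) * (p + q * E - p * E) := by
        apply mul_nonneg (mul_nonneg hq0.le (by linarith))
        nlinarith
      linarith
    have hps : 0 ≤ p * (a / (1+a)) := by positivity
    have h3 : Real.exp (-2 * (n:ℝ) * (q * (1 - 1/E))^2)
        ≤ 2 * Real.exp (-2 * (n:ℝ) * (p * (a / (1+a)))^2) := tail_le_delta hps hkey
    have h4 : (p * (a / (1+a)))^2 = p^2 * (a/(1+a))^2 := by ring
    rw [h4] at h3
    have h5 : -2 * (n:ℝ) * (p^2 * (a/(1+a))^2) = -2 * (n:ℝ) * p^2 * (a/(1+a))^2 := by ring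
    rw [h5] at h3
    calc _ ≤ ∑ k ∈ range (n+1), (if c₁ ≤ (k:ℝ) then binw p n k else 0) := h1
      _ ≤ Real.exp (-2 * (n:ℝ) * (q * (1 - 1/E))^2) := h2
      _ ≤ 2 * Real.exp (-2 * (n:ℝ) * p^2 * (a/(1+a))^2) := h3
  exact add_le_add hgood hbad

lemma coreA' {p ε : ℝ} (hp0 : 0 < p) (hp1 : p < 1) (hε : 0 < ε) {n : ℕ} (hn : 1 ≤ n)
    (G : ℕ → Prop) [DecidablePred G] :
    ∑ k ∈ range (n+1), (if G k then binw p n k else 0)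
      ≤ Real.exp ε * (∑ j ∈ range n, (if G (j+1) then binw p (n-1) j else 0))
        + 2 * Real.exp (-2 * (n:ℝ) * p^2 *
            (((1-p) * (Real.exp ε - 1)) / (1 + (1-p) * (Real.exp ε - 1)))^2) := by
  classical
  set q : ℝ := 1 - p with hq
  have hq0 : 0 < q := by rw [hq]; linarith
  set E : ℝ := Real.exp ε with hE
  have hE0 : 0 < E := Real.exp_pos ε
  have hE1 : 1 < E := by rw [hE, ← Real.exp_zero]; exact Real.exp_lt_exp.2 hε
  set a : ℝ := q * (E - 1) with ha
  have ha0 : 0 < a := by apply mul_pos hq0; linarith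
  have hn0 : (0:ℝ) < n := by exact_mod_cast hn
  clear_value q E a
  have h1a : (0:ℝ) < 1 + a := by linarith
  set c : ℝ := (n:ℝ) * p / E with hc
  clear_value c
  have hsplit : ∑ k ∈ range (n+1), (if G k then binw p n k else 0)
      = (∑ k ∈ range (n+1), (if G k ∧ (n:ℝ) * p ≤ E * k then binw p n k else 0))
        + (∑ k ∈ range (n+1), (if G k ∧ ¬ ((n:ℝ) * p ≤ E * k) then binw p n k else 0)) := by
    rw [← Finset.sum_add_distrib]
    apply Finset.sum_congr rfl
    intro k _
    by_cases h1 : G k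
    · by_cases h2 : (n:ℝ) * p ≤ E * k <;> simp [h1, h2]
    · simp [h1]
  rw [hsplit]
  have hgood : ∑ k ∈ range (n+1), (if G k ∧ (n:ℝ) * p ≤ E * k then binw p n k else 0)
      ≤ E * (∑ j ∈ range n, (if G (j+1) then binw p (n-1) j else 0)) := by
    have hzero : (if G 0 ∧ (n:ℝ) * p ≤ E * (0:ℕ) then binw p n 0 else 0) = 0 := by
      rw [if_neg]
      rintro ⟨-, h⟩
      push_cast at h
      nlinarith
    have h1 : ∑ k ∈ range (n+1), (if G k ∧ (n:ℝ) * p ≤ E * k then binw p n k else 0)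
        = ∑ j ∈ range n, (if G (j+1) ∧ (n:ℝ) * p ≤ E * ((j:ℝ)+1) then binw p n (j+1) else 0) := by
      rw [Finset.sum_range_succ' (fun k => if G k ∧ (n:ℝ) * p ≤ E * k then binw p n k else 0) n]
      rw [hzero, add_zero]
      apply Finset.sum_congr rfl
      intro j _
      congr 2
      push_cast
      ring_nf
    rw [h1]
    have h2 : ∑ j ∈ range n, (if G (j+1) ∧ (n:ℝ) * p ≤ E * ((j:ℝ)+1) then binw p n (j+1) else 0)
        ≤ ∑ j ∈ range n, (if G (j+1) then E * binw p (n-1) j else 0) := by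
      apply Finset.sum_le_sum
      intro j hj
      have hjn : j < n := Finset.mem_range.1 hj
      by_cases h : G (j+1) ∧ (n:ℝ) * p ≤ E * ((j:ℝ)+1)
      · rw [if_pos h, if_pos h.1]
        obtain ⟨hGj, hgd⟩ := h
        have hC0 : (0:ℝ) ≤ (n.choose (j+1) : ℝ) := Nat.cast_nonneg _
        have haux := nat_choose_aux2 (n := n) (j := j) hn
        have hkey : (n.choose (j+1) : ℝ) * p ≤ E * ((n-1).choose j : ℝ) := by
          have h5 : (n.choose (j+1) : ℝ) * ((n:ℝ) * p)
              ≤ (n.choose (j+1) : ℝ) * (E * ((j:ℝ)+1)) := mul_le_mul_of_nonneg_left hgd hC0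
          have h6 : (n:ℝ) * ((n.choose (j+1) : ℝ) * p) ≤ (n:ℝ) * (E * ((n-1).choose j : ℝ)) := by
            calc (n:ℝ) * ((n.choose (j+1) : ℝ) * p)
                = (n.choose (j+1) : ℝ) * ((n:ℝ) * p) := by ring
              _ ≤ (n.choose (j+1) : ℝ) * (E * ((j:ℝ)+1)) := h5
              _ = E * (((j:ℝ)+1) * (n.choose (j+1) : ℝ)) := by ring
              _ = E * ((n:ℝ) * ((n-1).choose j : ℝ)) := by rw [← haux]
              _ = (n:ℝ) * (E * ((n-1).choose j : ℝ)) := by ring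
          exact le_of_mul_le_mul_left h6 hn0
        unfold binw
        have hexp : n - (j+1) = (n-1) - j := by omega
        rw [hexp, pow_succ]
        have hpk : (0:ℝ) ≤ p ^ j * (1-p) ^ ((n-1) - j) :=
          mul_nonneg (pow_nonneg hp0.le j) (pow_nonneg (by linarith) _)
        calc (n.choose (j+1) : ℝ) * (p ^ j * p) * (1-p) ^ ((n-1) - j)
            = ((n.choose (j+1) : ℝ) * p) * (p ^ j * (1-p) ^ ((n-1) - j)) := by ring
          _ ≤ (E * ((n-1).choose j : ℝ)) * (p ^ j * (1-p) ^ ((n-1) - j)) :=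
              mul_le_mul_of_nonneg_right hkey hpk
          _ = E * (((n-1).choose j : ℝ) * p ^ j * (1-p) ^ ((n-1) - j)) := by ring
      · rw [if_neg h]
        by_cases h2 : G (j+1)
        · rw [if_pos h2]
          exact mul_nonneg hE0.le (binw_nonneg (by linarith) (by linarith) _ _)
        · rw [if_neg h2]
    calc _ ≤ ∑ j ∈ range n, (if G (j+1) then E * binw p (n-1) j else 0) := h2
      _ = E * (∑ j ∈ range n, (if G (j+1) then binw p (n-1) j else 0)) := by
          rw [Finset.mul_sum]
          apply Finset.sum_congr rfl
          intro j _
          by_cases h3 : G (j+1) <;> simp [h3]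
  have hbad : ∑ k ∈ range (n+1), (if G k ∧ ¬ ((n:ℝ) * p ≤ E * k) then binw p n k else 0)
      ≤ 2 * Real.exp (-2 * (n:ℝ) * p^2 * (a / (1 + a))^2) := by
    have h1 : ∑ k ∈ range (n+1), (if G k ∧ ¬ ((n:ℝ) * p ≤ E * k) then binw p n k else 0)
        ≤ ∑ k ∈ range (n+1), (if (k:ℝ) ≤ c then binw p n k else 0) := by
      apply Finset.sum_le_sum
      intro k _
      by_cases h : G k ∧ ¬ ((n:ℝ) * p ≤ E * k)
      · rw [if_pos h]
        have hlt : E * (k:ℝ) < (n:ℝ) * p := lt_of_not_ge h.2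
        have hck : (k:ℝ) ≤ c := by
          rw [hc, le_div_iff₀ hE0]
          nlinarith
        rw [if_pos hck]
      · rw [if_neg h]
        by_cases h2 : (k:ℝ) ≤ c
        · rw [if_pos h2]; exact binw_nonneg (by linarith) (by linarith) _ _
        · rw [if_neg h2]
    have hcle : c ≤ (n:ℝ) * p := by
      rw [hc, div_le_iff₀ hE0]
      nlinarith [mul_nonneg (mul_nonneg hn0.le hp0.le) (sub_nonneg.2 hE1.le)]
    have h2 := binom_lower_tail (le_of_lt hp0) (by linarith) hn hcle
    have hexp : -2 * ((n:ℝ) * p - c)^2 / n = -2 * (n:ℝ) * (p * (1 - 1/E))^2 := by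
      rw [hc]
      have h3 : (n:ℝ) * p - (n:ℝ) * p / E = (n:ℝ) * (p * (1 - 1/E)) := by
        field_simp
      rw [h3]
      field_simp
    rw [hexp] at h2
    have hkey : p * (a / (1+a)) ≤ p * (1 - 1/E) := by
      apply mul_le_mul_of_nonneg_left _ hp0.le
      rw [one_sub_div hE0.ne', div_le_div_iff₀ h1a hE0]
      nlinarith
    have hps : 0 ≤ p * (a / (1+a)) := by positivity
    have h3 := tail_le_delta (n := n) hps hkey
    have h4 : -2 * (n:ℝ) * (p * (a / (1+a)))^2 = -2 * (n:ℝ) * p^2 * (a/(1+a))^2 := by ring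
    rw [h4] at h3
    calc _ ≤ ∑ k ∈ range (n+1), (if (k:ℝ) ≤ c then binw p n k else 0) := h1
      _ ≤ Real.exp (-2 * (n:ℝ) * (p * (1 - 1/E))^2) := h2
      _ ≤ 2 * Real.exp (-2 * (n:ℝ) * p^2 * (a/(1+a))^2) := h3
  exact add_le_add hgood hbad

lemma nontrivial_facts {p ε : ℝ} (hp0 : 0 < p) (hp12 : p ≤ 1/2) (hε : 0 < ε) {n : ℕ} (hn : 1 ≤ n)
    (hδ : 2 * Real.exp (-2 * (n:ℝ) * p^2 *
        (((1-p) * (Real.exp ε - 1)) / (1 + (1-p) * (Real.exp ε - 1)))^2) < 1) :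
    2 ≤ n ∧ Real.log 2 < 2 * (n:ℝ) * p^2 *
        (((1-p) * (Real.exp ε - 1)) / (1 + (1-p) * (Real.exp ε - 1)))^2 := by
  set a : ℝ := (1-p) * (Real.exp ε - 1) with ha
  have hE1 : 1 < Real.exp ε := by rw [← Real.exp_zero]; exact Real.exp_lt_exp.2 hε
  have ha0 : 0 < a := by rw [ha]; apply mul_pos (by linarith); linarith
  have h1a : (0:ℝ) < 1 + a := by linarith
  set s : ℝ := a / (1+a) with hs
  have hs0 : 0 ≤ s := by rw [hs]; positivity
  have hs1 : s < 1 := by rw [hs, div_lt_one h1a]; linarith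
  clear_value a s
  have hexp : Real.exp (-2 * (n:ℝ) * p^2 * s^2) < 1/2 := by linarith
  have hlog : -2 * (n:ℝ) * p^2 * s^2 < Real.log (1/2) := by
    have := Real.log_lt_log (Real.exp_pos _) hexp
    rwa [Real.log_exp] at this
  have hlog2 : Real.log (1/2) = - Real.log 2 := by
    rw [show (1:ℝ)/2 = 2⁻¹ by norm_num, Real.log_inv]
  rw [hlog2] at hlog
  have hmain : Real.log 2 < 2 * (n:ℝ) * p^2 * s^2 := by linarith
  constructor
  · by_contra hcon
    push_neg at hcon
    interval_cases n
    · have hlogval : (0.6931471803:ℝ) < Real.log 2 := Real.log_two_gt_d9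
      have : (2:ℝ) * (1:ℕ) * p^2 * s^2 ≤ 1/2 := by
        have hp2 : p^2 ≤ 1/4 := by nlinarith
        have hss : s^2 ≤ 1 := by nlinarith
        push_cast
        nlinarith
      push_cast at hmain this
      linarith
  · exact hmain

set_option maxHeartbeats 1600000 in
lemma coreB {p ε : ℝ} (hp0 : 0 < p) (hp12 : p ≤ 1/2) (hε : 0 < ε) {n : ℕ} (hn : 1 ≤ n)
    (G : ℕ → Prop) [DecidablePred G] :
    ∑ k ∈ range n, (if G k then binw p (n-1) k else 0)
      ≤ Real.exp ε * (∑ k ∈ range (n+1), (if G k then binw p n k else 0))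
        + 2 * Real.exp (-2 * (n:ℝ) * p^2 *
            (((1-p) * (Real.exp ε - 1)) / (1 + (1-p) * (Real.exp ε - 1)))^2) := by
  classical
  have hp1 : p < 1 := by linarith
  have hbw : ∀ m k : ℕ, 0 ≤ binw p m k := fun m k => binw_nonneg hp0.le hp1.le m k
  have hRnn : 0 ≤ Real.exp ε * (∑ k ∈ range (n+1), (if G k then binw p n k else 0)) := by
    apply mul_nonneg (Real.exp_pos ε).le
    apply Finset.sum_nonneg
    intro k _
    by_cases h : G k
    · rw [if_pos h]; exact hbw n k
    · rw [if_neg h]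
  by_cases hδ : 1 ≤ 2 * Real.exp (-2 * (n:ℝ) * p^2 *
      (((1-p) * (Real.exp ε - 1)) / (1 + (1-p) * (Real.exp ε - 1)))^2)
  · have hL : ∑ k ∈ range n, (if G k then binw p (n-1) k else 0) ≤ 1 := by
      have h1 : ∑ k ∈ range n, (if G k then binw p (n-1) k else 0)
          ≤ ∑ k ∈ range n, binw p (n-1) k := by
        apply Finset.sum_le_sum
        intro k _
        by_cases h : G k
        · rw [if_pos h]
        · rw [if_neg h]; exact hbw _ k
      have h2 : ∑ k ∈ range n, binw p (n-1) k = 1 := by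
        have h3 := binw_sum_one (p := p) (n-1)
        rwa [show n - 1 + 1 = n from by omega] at h3
      linarith
    linarith
  · push_neg at hδ
    obtain ⟨hn2, hnt⟩ := nontrivial_facts hp0 hp12 hε hn hδ
    set q : ℝ := 1 - p with hq
    have hq0 : 0 < q := by rw [hq]; linarith
    set E : ℝ := Real.exp ε with hE
    have hE0 : 0 < E := Real.exp_pos ε
    have hE1 : 1 < E := by rw [hE, ← Real.exp_zero]; exact Real.exp_lt_exp.2 hε
    set a : ℝ := q * (E - 1) with ha
    have ha0 : 0 < a := by apply mul_pos hq0; linarith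
    have h1a : (0:ℝ) < 1 + a := by linarith
    set s : ℝ := a / (1+a) with hs
    have hs0 : 0 ≤ s := by rw [hs]; positivity
    have hseq : s * (1+a) = a := by rw [hs]; field_simp
    have hn0 : (0:ℝ) < n := by positivity
    have hn1 : (1:ℝ) ≤ (n:ℝ) - 1 := by
      have : (2:ℝ) ≤ (n:ℝ) := by exact_mod_cast hn2
      linarith
    clear_value q E a s
    -- nontriviality in current notation
    have hnt' : Real.log 2 < 2 * (n:ℝ) * p^2 * s^2 := hnt
    have hnt2 : Real.log 2 * (1+a)^2 < 2 * (n:ℝ) * p^2 * a^2 := by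
      have h1 := mul_lt_mul_of_pos_right hnt' (show (0:ℝ) < (1+a)^2 by positivity)
      have h2 : 2 * (n:ℝ) * p^2 * s^2 * (1+a)^2 = 2 * (n:ℝ) * p^2 * a^2 := by
        have e : s^2 * (1+a)^2 = a^2 := by rw [← mul_pow, hseq]
        calc 2 * (n:ℝ) * p^2 * s^2 * (1+a)^2 = 2 * (n:ℝ) * p^2 * (s^2 * (1+a)^2) := by ring
          _ = 2 * (n:ℝ) * p^2 * a^2 := by rw [e]
      linarith [h1, h2.le, h2.ge]
    have hlogval : (0.6931471803:ℝ) < Real.log 2 := Real.log_two_gt_d9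
    have hu : p^3 * a ≤ (Real.log 2 / 2) * ((1+a) * (q+a)) := by
      have h8 : p^3 ≤ 1/8 := by nlinarith
      have hqa : a ≤ (1+a) * (q+a) := by nlinarith [mul_pos ha0 ha0, mul_pos ha0 hq0]
      have w1 : p^3 * a ≤ (1/8) * a := by nlinarith
      have w2 : (1/8) * a ≤ (Real.log 2 / 2) * a := by nlinarith
      have w3 : (Real.log 2 / 2) * a ≤ (Real.log 2 / 2) * ((1+a) * (q+a)) := by
        apply mul_le_mul_of_nonneg_left hqa (by linarith)
      linarith
    have hqa0 : (0:ℝ) < q + a := by linarith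
    have hpa0 : (0:ℝ) < p^2 * a := by positivity
    have hv : p * (1+a) < (n:ℝ) * a * (q+a) := by
      have w1 : (Real.log 2 * (1+a)^2) * (q+a) < (2 * (n:ℝ) * p^2 * a^2) * (q+a) :=
        mul_lt_mul_of_pos_right hnt2 hqa0
      have w2 : (p^3 * a) * (1+a) ≤ ((Real.log 2 / 2) * ((1+a) * (q+a))) * (1+a) :=
        mul_le_mul_of_nonneg_right hu h1a.le
      have w3 : p * (1+a) * (p^2 * a) < (n:ℝ) * a * (q+a) * (p^2 * a) := by nlinarith [w1, w2]
      exact lt_of_mul_lt_mul_right w3 hpa0.le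
    have hdev : (n:ℝ) * p * s ≤ (n:ℝ) * a - p := by
      have hgoal : (n:ℝ) * p * a ≤ ((n:ℝ) * a - p) * (1+a) := by
        have e : (n:ℝ) * (a * q) = (n:ℝ) * a - (n:ℝ) * (a * p) := by rw [hq]; ring
        nlinarith [hv, e]
      have : (n:ℝ) * p * s * (1+a) = (n:ℝ) * p * a := by
        rw [show (n:ℝ) * p * s * (1+a) = (n:ℝ) * p * (s * (1+a)) from by ring, hseq]
      nlinarith [hgoal, this]
    have hdev0 : 0 ≤ (n:ℝ) * a - p := le_trans (by positivity) hdev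
    -- split
    have hsplit : ∑ k ∈ range n, (if G k then binw p (n-1) k else 0)
        = (∑ k ∈ range n, (if G k ∧ (n:ℝ) - k ≤ E * ((n:ℝ) * q) then binw p (n-1) k else 0))
          + (∑ k ∈ range n, (if G k ∧ ¬ ((n:ℝ) - k ≤ E * ((n:ℝ) * q)) then binw p (n-1) k else 0)) := by
      rw [← Finset.sum_add_distrib]
      apply Finset.sum_congr rfl
      intro k _
      by_cases h1 : G k
      · by_cases h2 : (n:ℝ) - k ≤ E * ((n:ℝ) * q) <;> simp [h1, h2]
      · simp [h1]
    rw [hsplit]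
    have hgood : ∑ k ∈ range n, (if G k ∧ (n:ℝ) - k ≤ E * ((n:ℝ) * q) then binw p (n-1) k else 0)
        ≤ E * (∑ k ∈ range (n+1), (if G k then binw p n k else 0)) := by
      have h1 : ∑ k ∈ range n, (if G k ∧ (n:ℝ) - k ≤ E * ((n:ℝ) * q) then binw p (n-1) k else 0)
          ≤ ∑ k ∈ range n, (if G k then E * binw p n k else 0) := by
        apply Finset.sum_le_sum
        intro k hk
        have hkn : k < n := Finset.mem_range.1 hk
        by_cases h : G k ∧ (n:ℝ) - k ≤ E * ((n:ℝ) * q)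
        · rw [if_pos h, if_pos h.1]
          obtain ⟨hGk, hgd⟩ := h
          have hC0 : (0:ℝ) ≤ (n.choose k : ℝ) := Nat.cast_nonneg _
          have haux := nat_choose_aux1 hkn
          have hkey : ((n-1).choose k : ℝ) ≤ E * ((n.choose k : ℝ) * q) := by
            have h5 : (n.choose k : ℝ) * ((n:ℝ) - k) ≤ (n.choose k : ℝ) * (E * ((n:ℝ) * q)) :=
              mul_le_mul_of_nonneg_left hgd hC0
            have h6 : (n:ℝ) * ((n-1).choose k : ℝ) ≤ (n:ℝ) * (E * ((n.choose k : ℝ) * q)) := by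
              calc (n:ℝ) * ((n-1).choose k : ℝ) = (n.choose k : ℝ) * ((n:ℝ) - k) := haux
                _ ≤ (n.choose k : ℝ) * (E * ((n:ℝ) * q)) := h5
                _ = (n:ℝ) * (E * ((n.choose k : ℝ) * q)) := by ring
            exact le_of_mul_le_mul_left h6 hn0
          unfold binw
          have hexp : n - k = ((n-1) - k) + 1 := by omega
          rw [hexp, pow_succ]
          have hpk : (0:ℝ) ≤ p ^ k * (1-p) ^ ((n-1) - k) :=
            mul_nonneg (pow_nonneg hp0.le k) (pow_nonneg (by linarith) _)
          calc ((n-1).choose k : ℝ) * p ^ k * (1-p) ^ ((n-1) - k)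
              = ((n-1).choose k : ℝ) * (p ^ k * (1-p) ^ ((n-1) - k)) := by ring
            _ ≤ (E * ((n.choose k : ℝ) * q)) * (p ^ k * (1-p) ^ ((n-1) - k)) :=
                mul_le_mul_of_nonneg_right hkey hpk
            _ = E * ((n.choose k : ℝ) * p ^ k * ((1-p) ^ ((n-1) - k) * (1-p))) := by
                rw [hq]; ring
        · rw [if_neg h]
          by_cases h2 : G k
          · rw [if_pos h2]
            exact mul_nonneg hE0.le (hbw n k)
          · rw [if_neg h2]
      have h2 : ∑ k ∈ range n, (if G k then E * binw p n k else 0)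
          ≤ ∑ k ∈ range (n+1), (if G k then E * binw p n k else 0) := by
        apply Finset.sum_le_sum_of_subset_of_nonneg (Finset.range_subset_range.2 (by omega))
        intro k _ _
        by_cases h3 : G k
        · rw [if_pos h3]; exact mul_nonneg hE0.le (hbw n k)
        · rw [if_neg h3]
      have h3 : ∑ k ∈ range (n+1), (if G k then E * binw p n k else 0)
          = E * ∑ k ∈ range (n+1), (if G k then binw p n k else 0) := by
        rw [Finset.mul_sum]
        apply Finset.sum_congr rfl
        intro k _
        by_cases h4 : G k <;> simp [h4]
      linarith
    have hbad : ∑ k ∈ range n, (if G k ∧ ¬ ((n:ℝ) - k ≤ E * ((n:ℝ) * q)) then binw p (n-1) k else 0)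
        ≤ 2 * Real.exp (-2 * (n:ℝ) * p^2 * s^2) := by
      set c₂ : ℝ := (n:ℝ) - E * ((n:ℝ) * q) with hc₂
      clear_value c₂
      have h1 : ∑ k ∈ range n, (if G k ∧ ¬ ((n:ℝ) - k ≤ E * ((n:ℝ) * q)) then binw p (n-1) k else 0)
          ≤ ∑ k ∈ range n, (if (k:ℝ) ≤ c₂ then binw p (n-1) k else 0) := by
        apply Finset.sum_le_sum
        intro k _
        by_cases h : G k ∧ ¬ ((n:ℝ) - k ≤ E * ((n:ℝ) * q))
        · rw [if_pos h]
          have hlt : E * ((n:ℝ) * q) < (n:ℝ) - k := lt_of_not_ge h.2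
          have hck : (k:ℝ) ≤ c₂ := by rw [hc₂]; linarith
          rw [if_pos hck]
        · rw [if_neg h]
          by_cases h2 : (k:ℝ) ≤ c₂
          · rw [if_pos h2]; exact hbw _ k
          · rw [if_neg h2]
      have hm1 : 1 ≤ n - 1 := by omega
      have hcast : ((n - 1 : ℕ) : ℝ) = (n:ℝ) - 1 := by
        push_cast [hn]
        ring
      have hid : ((n:ℝ) - 1) * p - c₂ = (n:ℝ) * a - p := by
        rw [hc₂, ha, hq]; ring
      have hcle : c₂ ≤ ((n - 1 : ℕ) : ℝ) * p := by
        rw [hcast]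
        nlinarith [hdev0, hid]
      have h2 := binom_lower_tail hp0.le hp1.le hm1 hcle
      rw [show (n - 1) + 1 = n from by omega] at h2
      have hE2 : -2 * (((n - 1 : ℕ) : ℝ) * p - c₂)^2 / ((n - 1 : ℕ) : ℝ)
          ≤ -2 * (n:ℝ) * p^2 * s^2 := by
        rw [hcast, hid, div_le_iff₀ (by linarith : (0:ℝ) < (n:ℝ) - 1)]
        have hsq : ((n:ℝ) * p * s) * ((n:ℝ) * p * s) ≤ ((n:ℝ) * a - p) * ((n:ℝ) * a - p) :=
          mul_self_le_mul_self (by positivity) hdev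
        have hnn : 0 ≤ (n:ℝ) * (p * s)^2 := by positivity
        linarith only [hsq, hnn]
      calc _ ≤ ∑ k ∈ range n, (if (k:ℝ) ≤ c₂ then binw p (n-1) k else 0) := h1
        _ ≤ Real.exp (-2 * (((n - 1 : ℕ) : ℝ) * p - c₂)^2 / ((n - 1 : ℕ) : ℝ)) := h2
        _ ≤ 2 * Real.exp (-2 * (n:ℝ) * p^2 * s^2) := by
            have := Real.exp_le_exp.2 hE2
            linarith [Real.exp_pos (-2 * (n:ℝ) * p^2 * s^2)]
    exact add_le_add hgood hbad

set_option maxHeartbeats 1600000 in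
lemma coreB' {p ε : ℝ} (hp0 : 0 < p) (hp12 : p ≤ 1/2) (hε : 0 < ε) {n : ℕ} (hn : 1 ≤ n)
    (G : ℕ → Prop) [DecidablePred G] :
    ∑ j ∈ range n, (if G (j+1) then binw p (n-1) j else 0)
      ≤ Real.exp ε * (∑ k ∈ range (n+1), (if G k then binw p n k else 0))
        + 2 * Real.exp (-2 * (n:ℝ) * p^2 *
            (((1-p) * (Real.exp ε - 1)) / (1 + (1-p) * (Real.exp ε - 1)))^2) := by
  classical
  have hp1 : p < 1 := by linarith
  have hbw : ∀ m k : ℕ, 0 ≤ binw p m k := fun m k => binw_nonneg hp0.le hp1.le m k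
  have hRnn : 0 ≤ Real.exp ε * (∑ k ∈ range (n+1), (if G k then binw p n k else 0)) := by
    apply mul_nonneg (Real.exp_pos ε).le
    apply Finset.sum_nonneg
    intro k _
    by_cases h : G k
    · rw [if_pos h]; exact hbw n k
    · rw [if_neg h]
  by_cases hδ : 1 ≤ 2 * Real.exp (-2 * (n:ℝ) * p^2 *
      (((1-p) * (Real.exp ε - 1)) / (1 + (1-p) * (Real.exp ε - 1)))^2)
  · have hL : ∑ j ∈ range n, (if G (j+1) then binw p (n-1) j else 0) ≤ 1 := by
      have h1 : ∑ j ∈ range n, (if G (j+1) then binw p (n-1) j else 0)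
          ≤ ∑ j ∈ range n, binw p (n-1) j := by
        apply Finset.sum_le_sum
        intro k _
        by_cases h : G (k+1)
        · rw [if_pos h]
        · rw [if_neg h]; exact hbw _ k
      have h2 : ∑ j ∈ range n, binw p (n-1) j = 1 := by
        have h3 := binw_sum_one (p := p) (n-1)
        rwa [show n - 1 + 1 = n from by omega] at h3
      linarith
    linarith
  · push_neg at hδ
    obtain ⟨hn2, hnt⟩ := nontrivial_facts hp0 hp12 hε hn hδ
    set q : ℝ := 1 - p with hq
    have hq0 : 0 < q := by rw [hq]; linarith
    set E : ℝ := Real.exp ε with hE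
    have hE0 : 0 < E := Real.exp_pos ε
    have hE1 : 1 < E := by rw [hE, ← Real.exp_zero]; exact Real.exp_lt_exp.2 hε
    set a : ℝ := q * (E - 1) with ha
    have ha0 : 0 < a := by apply mul_pos hq0; linarith
    have h1a : (0:ℝ) < 1 + a := by linarith
    set s : ℝ := a / (1+a) with hs
    have hs0 : 0 ≤ s := by rw [hs]; positivity
    have hseq : s * (1+a) = a := by rw [hs]; field_simp
    set A : ℝ := p * (E - 1) with hA
    have hA0 : 0 < A := by apply mul_pos hp0; linarith
    have haq : A * q = p * a := by rw [hA, ha]; ring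
    have hn0 : (0:ℝ) < n := by positivity
    have hn1 : (1:ℝ) ≤ (n:ℝ) - 1 := by
      have : (2:ℝ) ≤ (n:ℝ) := by exact_mod_cast hn2
      linarith
    clear_value q E a s A
    have hnt2 : Real.log 2 * (1+a)^2 < 2 * (n:ℝ) * p^2 * a^2 := by
      have h1 := mul_lt_mul_of_pos_right hnt (show (0:ℝ) < (1+a)^2 by positivity)
      have h2 : 2 * (n:ℝ) * p^2 * s^2 * (1+a)^2 = 2 * (n:ℝ) * p^2 * a^2 := by
        have e : s^2 * (1+a)^2 = a^2 := by rw [← mul_pow, hseq]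
        calc 2 * (n:ℝ) * p^2 * s^2 * (1+a)^2 = 2 * (n:ℝ) * p^2 * (s^2 * (1+a)^2) := by ring
          _ = 2 * (n:ℝ) * p^2 * a^2 := by rw [e]
      linarith [h1, h2.le, h2.ge]
    have hlogval : (0.6931471803:ℝ) < Real.log 2 := Real.log_two_gt_d9
    have hu : q^2 * p * a ≤ (Real.log 2 / 2) * ((1+a) * (p+a)) := by
      have h427 : q^2 * p ≤ 4/27 := by
        rw [hq]
        nlinarith [mul_nonneg (sq_nonneg (3*p - 1)) (show (0:ℝ) ≤ 4 - 3*p by linarith)]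
      have hqa : a ≤ (1+a) * (p+a) := by nlinarith [mul_pos ha0 ha0, mul_pos ha0 hp0]
      have w1 : q^2 * p * a ≤ (4/27) * a := by nlinarith
      have w2 : (4/27) * a ≤ (Real.log 2 / 2) * a := by nlinarith
      have w3 : (Real.log 2 / 2) * a ≤ (Real.log 2 / 2) * ((1+a) * (p+a)) := by
        apply mul_le_mul_of_nonneg_left hqa (by linarith)
      linarith
    have hpa0 : (0:ℝ) < p + a := by linarith
    have hqpa0 : (0:ℝ) < q * p * a := by positivity
    have hv : q * (1+a) < (n:ℝ) * (A * (p+a)) := by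
      have w1 : (Real.log 2 * (1+a)^2) * (p+a) < (2 * (n:ℝ) * p^2 * a^2) * (p+a) :=
        mul_lt_mul_of_pos_right hnt2 hpa0
      have w2 : (q^2 * p * a) * (1+a) ≤ ((Real.log 2 / 2) * ((1+a) * (p+a))) * (1+a) :=
        mul_le_mul_of_nonneg_right hu h1a.le
      have w3 : q * (1+a) * (q * p * a) < ((n:ℝ) * p^2 * a^2) * (p+a) := by linarith only [w1, w2]
      have w4 : ((n:ℝ) * p^2 * a^2) * (p+a) = (n:ℝ) * (A * (p+a)) * (q * p * a) := by
        rw [hA, ha]; ring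
      rw [w4] at w3
      exact lt_of_mul_lt_mul_right w3 hqpa0.le
    have hdev : (n:ℝ) * p * s ≤ (n:ℝ) * A - q := by
      have haqn : (n:ℝ) * (A * q) = (n:ℝ) * (p * a) := by rw [haq]
      have hsplitA : (n:ℝ) * A = (n:ℝ) * (A * p) + (n:ℝ) * (A * q) := by rw [hq]; ring
      have hgoal : (n:ℝ) * p * a ≤ ((n:ℝ) * A - q) * (1+a) := by linarith only [hv, haqn, hsplitA]
      have heq : (n:ℝ) * p * s * (1+a) = (n:ℝ) * p * a := by
        rw [show (n:ℝ) * p * s * (1+a) = (n:ℝ) * p * (s * (1+a)) from by ring, hseq]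
      have h7 : (n:ℝ) * p * s * (1+a) ≤ ((n:ℝ) * A - q) * (1+a) := by rw [heq]; exact hgoal
      exact le_of_mul_le_mul_right h7 h1a
    have hdev0 : 0 ≤ (n:ℝ) * A - q := le_trans (by positivity) hdev
    -- split
    have hsplit : ∑ j ∈ range n, (if G (j+1) then binw p (n-1) j else 0)
        = (∑ j ∈ range n, (if G (j+1) ∧ (j:ℝ) + 1 ≤ E * ((n:ℝ) * p) then binw p (n-1) j else 0))
          + (∑ j ∈ range n, (if G (j+1) ∧ ¬ ((j:ℝ) + 1 ≤ E * ((n:ℝ) * p)) then binw p (n-1) j else 0)) := by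
      rw [← Finset.sum_add_distrib]
      apply Finset.sum_congr rfl
      intro j _
      by_cases h1 : G (j+1)
      · by_cases h2 : (j:ℝ) + 1 ≤ E * ((n:ℝ) * p) <;> simp [h1, h2]
      · simp [h1]
    rw [hsplit]
    have hgood : ∑ j ∈ range n, (if G (j+1) ∧ (j:ℝ) + 1 ≤ E * ((n:ℝ) * p) then binw p (n-1) j else 0)
        ≤ E * (∑ k ∈ range (n+1), (if G k then binw p n k else 0)) := by
      have h1 : ∑ j ∈ range n, (if G (j+1) ∧ (j:ℝ) + 1 ≤ E * ((n:ℝ) * p) then binw p (n-1) j else 0)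
          ≤ ∑ j ∈ range n, (if G (j+1) then E * binw p n (j+1) else 0) := by
        apply Finset.sum_le_sum
        intro j hj
        have hjn : j < n := Finset.mem_range.1 hj
        by_cases h : G (j+1) ∧ (j:ℝ) + 1 ≤ E * ((n:ℝ) * p)
        · rw [if_pos h, if_pos h.1]
          obtain ⟨hGj, hgd⟩ := h
          have hC0 : (0:ℝ) ≤ (n.choose (j+1) : ℝ) := Nat.cast_nonneg _
          have haux := nat_choose_aux2 (n := n) (j := j) hn
          have hkey : ((n-1).choose j : ℝ) ≤ E * ((n.choose (j+1) : ℝ) * p) := by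
            have h5 : (n.choose (j+1) : ℝ) * ((j:ℝ) + 1) ≤ (n.choose (j+1) : ℝ) * (E * ((n:ℝ) * p)) :=
              mul_le_mul_of_nonneg_left hgd hC0
            have h6 : (n:ℝ) * ((n-1).choose j : ℝ) ≤ (n:ℝ) * (E * ((n.choose (j+1) : ℝ) * p)) := by
              calc (n:ℝ) * ((n-1).choose j : ℝ) = ((j:ℝ) + 1) * (n.choose (j+1) : ℝ) := haux
                _ = (n.choose (j+1) : ℝ) * ((j:ℝ) + 1) := by ring
                _ ≤ (n.choose (j+1) : ℝ) * (E * ((n:ℝ) * p)) := h5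
                _ = (n:ℝ) * (E * ((n.choose (j+1) : ℝ) * p)) := by ring
            exact le_of_mul_le_mul_left h6 hn0
          unfold binw
          have hexp : n - (j+1) = (n-1) - j := by omega
          rw [hexp, pow_succ]
          have hpk : (0:ℝ) ≤ p ^ j * (1-p) ^ ((n-1) - j) :=
            mul_nonneg (pow_nonneg hp0.le j) (pow_nonneg (by linarith) _)
          calc ((n-1).choose j : ℝ) * p ^ j * (1-p) ^ ((n-1) - j)
              = ((n-1).choose j : ℝ) * (p ^ j * (1-p) ^ ((n-1) - j)) := by ring
            _ ≤ (E * ((n.choose (j+1) : ℝ) * p)) * (p ^ j * (1-p) ^ ((n-1) - j)) :=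
                mul_le_mul_of_nonneg_right hkey hpk
            _ = E * ((n.choose (j+1) : ℝ) * (p ^ j * p) * (1-p) ^ ((n-1) - j)) := by ring
        · rw [if_neg h]
          by_cases h2 : G (j+1)
          · rw [if_pos h2]
            exact mul_nonneg hE0.le (hbw n (j+1))
          · rw [if_neg h2]
      have h2 : ∑ j ∈ range n, (if G (j+1) then E * binw p n (j+1) else 0)
          ≤ ∑ k ∈ range (n+1), (if G k then E * binw p n k else 0) := by
        rw [Finset.sum_range_succ' (fun k => if G k then E * binw p n k else 0) n]
        have h0 : 0 ≤ (if G 0 then E * binw p n 0 else 0) := by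
          by_cases h3 : G 0
          · rw [if_pos h3]; exact mul_nonneg hE0.le (hbw n 0)
          · rw [if_neg h3]
        linarith
      have h3 : ∑ k ∈ range (n+1), (if G k then E * binw p n k else 0)
          = E * ∑ k ∈ range (n+1), (if G k then binw p n k else 0) := by
        rw [Finset.mul_sum]
        apply Finset.sum_congr rfl
        intro k _
        by_cases h4 : G k <;> simp [h4]
      linarith
    have hbad : ∑ j ∈ range n, (if G (j+1) ∧ ¬ ((j:ℝ) + 1 ≤ E * ((n:ℝ) * p)) then binw p (n-1) j else 0)
        ≤ 2 * Real.exp (-2 * (n:ℝ) * p^2 * s^2) := by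
      set c₃ : ℝ := E * ((n:ℝ) * p) - 1 with hc₃
      clear_value c₃
      have h1 : ∑ j ∈ range n, (if G (j+1) ∧ ¬ ((j:ℝ) + 1 ≤ E * ((n:ℝ) * p)) then binw p (n-1) j else 0)
          ≤ ∑ j ∈ range n, (if c₃ ≤ (j:ℝ) then binw p (n-1) j else 0) := by
        apply Finset.sum_le_sum
        intro j _
        by_cases h : G (j+1) ∧ ¬ ((j:ℝ) + 1 ≤ E * ((n:ℝ) * p))
        · rw [if_pos h]
          have hlt : E * ((n:ℝ) * p) < (j:ℝ) + 1 := lt_of_not_ge h.2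
          have hcj : c₃ ≤ (j:ℝ) := by rw [hc₃]; linarith
          rw [if_pos hcj]
        · rw [if_neg h]
          by_cases h2 : c₃ ≤ (j:ℝ)
          · rw [if_pos h2]; exact hbw _ j
          · rw [if_neg h2]
      have hm1 : 1 ≤ n - 1 := by omega
      have hcast : ((n - 1 : ℕ) : ℝ) = (n:ℝ) - 1 := by
        push_cast [hn]
        ring
      have hid : c₃ - ((n:ℝ) - 1) * p = (n:ℝ) * A - q := by
        rw [hc₃, hA, hq]; ring
      have hcge : ((n - 1 : ℕ) : ℝ) * p ≤ c₃ := by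
        rw [hcast]
        linarith [hdev0, hid]
      have h2 := binom_upper_tail hp0.le hp1.le hm1 hcge
      rw [show (n - 1) + 1 = n from by omega] at h2
      have hE2 : -2 * (c₃ - ((n - 1 : ℕ) : ℝ) * p)^2 / ((n - 1 : ℕ) : ℝ)
          ≤ -2 * (n:ℝ) * p^2 * s^2 := by
        rw [hcast, hid, div_le_iff₀ (by linarith : (0:ℝ) < (n:ℝ) - 1)]
        have hsq : ((n:ℝ) * p * s) * ((n:ℝ) * p * s) ≤ ((n:ℝ) * A - q) * ((n:ℝ) * A - q) :=
          mul_self_le_mul_self (by positivity) hdev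
        have hnn : 0 ≤ (n:ℝ) * (p * s)^2 := by positivity
        linarith only [hsq, hnn]
      calc _ ≤ ∑ j ∈ range n, (if c₃ ≤ (j:ℝ) then binw p (n-1) j else 0) := h1
        _ ≤ Real.exp (-2 * (c₃ - ((n - 1 : ℕ) : ℝ) * p)^2 / ((n - 1 : ℕ) : ℝ)) := h2
        _ ≤ 2 * Real.exp (-2 * (n:ℝ) * p^2 * s^2) := by
            have := Real.exp_le_exp.2 hE2
            linarith [Real.exp_pos (-2 * (n:ℝ) * p^2 * s^2)]
    exact add_le_add hgood hbad

lemma pow_sum_powerset {p : ℝ} (hp0 : 0 ≤ p) (hp1 : p ≤ 1) {α : Type*} [DecidableEq α]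
    (u : Finset α) :
    ∑ w ∈ u.powerset, p ^ w.card * (1-p) ^ (u.card - w.card) = 1 := by
  have h1 := Finset.sum_powerset_apply_card (fun m => p ^ m * (1-p) ^ (u.card - m)) (x := u)
  rw [h1]
  have h2 : ∀ m ∈ range (u.card + 1),
      (u.card.choose m) • (p ^ m * (1-p) ^ (u.card - m))
        = p ^ m * (1-p) ^ (u.card - m) * (u.card.choose m : ℝ) := by
    intro m _
    rw [nsmul_eq_mul]
    ring
  rw [Finset.sum_congr rfl h2, ← add_pow]
  norm_num

lemma sum_subsets {p : ℝ} {n : ℕ} (s : Finset (Fin n)) (g : ℕ → ℝ) :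
    ∑ T : Finset (Fin n), g ((s ∩ T).card) * p ^ T.card * (1-p) ^ (n - T.card)
      = (∑ k ∈ range (s.card + 1), g k * binw p s.card k)
          * (∑ w ∈ sᶜ.powerset, p ^ w.card * (1-p) ^ (sᶜ.card - w.card)) := by
  classical
  have hcards : s.card + sᶜ.card = n := by
    rw [Finset.card_compl]
    have := Finset.card_le_univ s
    simp only [Fintype.card_fin] at *
    omega
  have step1 : ∑ T : Finset (Fin n), g ((s ∩ T).card) * p ^ T.card * (1-p) ^ (n - T.card)
      = ∑ z ∈ s.powerset ×ˢ sᶜ.powerset,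
          (g (z.1.card) * (p ^ z.1.card * (1-p) ^ (s.card - z.1.card)))
            * (p ^ z.2.card * (1-p) ^ (sᶜ.card - z.2.card)) := by
    rw [show (∑ T : Finset (Fin n), g ((s ∩ T).card) * p ^ T.card * (1-p) ^ (n - T.card))
        = ∑ T ∈ (Finset.univ : Finset (Fin n)).powerset,
            g ((s ∩ T).card) * p ^ T.card * (1-p) ^ (n - T.card) from by
      rw [Finset.powerset_univ]]
    apply Finset.sum_nbij' (i := fun T => (T ∩ s, T \ s)) (j := fun z => z.1 ∪ z.2)
    · intro T _
      simp only [Finset.mem_product, Finset.mem_powerset]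
      refine ⟨Finset.inter_subset_right, ?_⟩
      intro x hx
      simp only [Finset.mem_sdiff] at hx
      simp only [Finset.mem_compl]
      exact hx.2
    · intro z _
      simp [Finset.mem_powerset]
    · intro T _
      ext x
      simp only [Finset.mem_union, Finset.mem_inter, Finset.mem_sdiff]
      tauto
    · intro z hz
      simp only [Finset.mem_product, Finset.mem_powerset] at hz
      obtain ⟨h1, h2⟩ := hz
      have e1 : (z.1 ∪ z.2) ∩ s = z.1 := by
        ext x
        simp only [Finset.mem_inter, Finset.mem_union]
        constructor
        · rintro ⟨h3 | h3, h4⟩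
          · exact h3
          · exact absurd h4 (by simpa using h2 h3)
        · intro h3
          exact ⟨Or.inl h3, h1 h3⟩
      have e2 : (z.1 ∪ z.2) \ s = z.2 := by
        ext x
        simp only [Finset.mem_sdiff, Finset.mem_union]
        constructor
        · rintro ⟨h3 | h3, h4⟩
          · exact absurd (h1 h3) h4
          · exact h3
        · intro h3
          exact ⟨Or.inr h3, by simpa using h2 h3⟩
      rw [Prod.ext_iff]
      exact ⟨e1, e2⟩
    · intro T _
      have hds : (s ∩ T) = T ∩ s := Finset.inter_comm s T
      have hcT : (T ∩ s).card + (T \ s).card = T.card := Finset.card_inter_add_card_sdiff T s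
      have hb1 : (T ∩ s).card ≤ s.card := Finset.card_le_card Finset.inter_subset_right
      have hb2 : (T \ s).card ≤ sᶜ.card := by
        apply Finset.card_le_card
        intro x hx
        simp only [Finset.mem_sdiff] at hx
        simp only [Finset.mem_compl]
        exact hx.2
      have hexp : n - T.card = (s.card - (T ∩ s).card) + (sᶜ.card - (T \ s).card) := by omega
      rw [hds, hexp, pow_add, ← hcT, pow_add]
      ring
  rw [step1, Finset.sum_product]
  dsimp only
  rw [← Finset.sum_mul_sum]
  congr 1
  have houter := Finset.sum_powerset_apply_card
    (fun m => g m * (p ^ m * (1-p) ^ (s.card - m))) (x := s)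
  rw [houter]
  apply Finset.sum_congr rfl
  intro k _
  rw [nsmul_eq_mul]
  unfold binw
  ring

lemma reflect_sum {p : ℝ} {m : ℕ} (G : ℕ → Prop) [DecidablePred G] :
    ∑ k ∈ range (m+1), (if G k then binw p m k else 0)
      = ∑ j ∈ range (m+1), (if G (m - j) then binw (1-p) m j else 0) := by
  rw [← Finset.sum_range_reflect (fun j => if G (m - j) then binw (1-p) m j else 0) (m+1)]
  apply Finset.sum_congr rfl
  intro k hk
  have hkm : k ≤ m := by
    have := Finset.mem_range.1 hk
    omega
  have h1 : m + 1 - 1 - k = m - k := by omega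
  rw [h1]
  have h2 : m - (m - k) = k := by omega
  rw [h2]
  congr 1
  unfold binw
  rw [Nat.choose_symm hkm, h2]
  have h3 : 1 - (1 - p) = p := by ring
  rw [h3]
  ring

set_option maxHeartbeats 1600000 in
lemma law_sum {Ω : Type*} [MeasurableSpace Ω] (μ : MeasureTheory.Measure Ω)
    [MeasureTheory.IsProbabilityMeasure μ]
    {n : ℕ} {p : ℝ} (hp0 : 0 < p) (hp1 : p < 1)
    (X : Fin n → Ω → ℝ) (hXmeas : ∀ i, Measurable (X i))
    (hindep : ProbabilityTheory.iIndepFun X μ)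
    (hBern1 : ∀ i, μ {ω | X i ω = 1} = ENNReal.ofReal p)
    (hBern0 : ∀ i, μ {ω | X i ω = 0} = ENNReal.ofReal (1 - p))
    (s : Finset (Fin n)) (B : Set ℝ) [DecidablePred (· ∈ B)] :
    (μ {ω | (∑ i ∈ s, X i ω) ∈ B}).toReal
      = ∑ k ∈ range (s.card + 1), (if ((k:ℕ):ℝ) ∈ B then binw p s.card k else 0) := by
  set E : Set Ω := {ω | (∑ i ∈ s, X i ω) ∈ B} with hEdef
  -- the atoms
  set v : Finset (Fin n) → Fin n → ℝ := fun T i => if i ∈ T then 1 else 0 with hv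
  set A : Finset (Fin n) → Set Ω := fun T => ⋂ i, X i ⁻¹' {v T i} with hA
  have hpre1 : ∀ i : Fin n, X i ⁻¹' {(1:ℝ)} = {ω | X i ω = 1} := by
    intro i; ext ω; simp
  have hpre0 : ∀ i : Fin n, X i ⁻¹' {(0:ℝ)} = {ω | X i ω = 0} := by
    intro i; ext ω; simp
  have hAmeas : ∀ T, MeasurableSet (A T) := by
    intro T
    exact MeasurableSet.iInter (fun i => hXmeas i (measurableSet_singleton _))
  have hAdisj : Pairwise (Function.onFun Disjoint A) := by
    intro T T' hTT'
    have : ∃ i, (i ∈ T) ≠ (i ∈ T') := by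
      by_contra hcon
      push_neg at hcon
      apply hTT'
      ext i
      rw [hcon i]
    obtain ⟨i, hi⟩ := this
    rw [Function.onFun]
    rw [Set.disjoint_left]
    intro ω hω hω'
    have h1 : X i ω = v T i := by
      have := Set.mem_iInter.1 hω i
      simpa using this
    have h2 : X i ω = v T' i := by
      have := Set.mem_iInter.1 hω' i
      simpa using this
    rw [h1] at h2
    rw [hv] at h2
    simp only at h2
    by_cases hiT : i ∈ T <;> by_cases hiT' : i ∈ T' <;>
      simp [hiT, hiT'] at h2 hi
  have hAT : ∀ T : Finset (Fin n),
      μ (A T) = ENNReal.ofReal (p ^ T.card * (1-p) ^ (n - T.card)) := by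
    intro T
    have h1 : A T = ⋂ i ∈ (Finset.univ : Finset (Fin n)), X i ⁻¹' {v T i} := by
      rw [hA]
      simp
    rw [h1]
    rw [(ProbabilityTheory.iIndepFun_iff_measure_inter_preimage_eq_mul.mp hindep)
      Finset.univ (sets := fun i => {v T i}) (fun i _ => measurableSet_singleton _)]
    have h2 : ∀ i : Fin n, μ (X i ⁻¹' {v T i})
        = ENNReal.ofReal (if i ∈ T then p else 1-p) := by
      intro i
      rw [hv]
      by_cases hiT : i ∈ T
      · simp only [hiT, if_true]
        rw [hpre1 i, hBern1 i]
      · simp only [hiT, if_false]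
        rw [hpre0 i, hBern0 i]
    rw [Finset.prod_congr rfl (fun i _ => h2 i)]
    rw [← Finset.prod_mul_prod_compl T (fun i => ENNReal.ofReal (if i ∈ T then p else 1-p))]
    have h3 : ∏ i ∈ T, ENNReal.ofReal (if i ∈ T then p else 1-p) = (ENNReal.ofReal p) ^ T.card := by
      rw [Finset.prod_congr rfl (fun i hi => by rw [if_pos hi]), Finset.prod_const]
    have h4 : ∏ i ∈ Tᶜ, ENNReal.ofReal (if i ∈ T then p else 1-p)
        = (ENNReal.ofReal (1-p)) ^ (n - T.card) := by
      rw [Finset.prod_congr rfl (fun i hi => by rw [if_neg (Finset.mem_compl.1 hi)]),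
        Finset.prod_const, Finset.card_compl]
      simp
    rw [h3, h4, ← ENNReal.ofReal_pow hp0.le, ← ENNReal.ofReal_pow (by linarith),
      ← ENNReal.ofReal_mul (by positivity)]
  -- E ∩ A T
  have hEA : ∀ T : Finset (Fin n),
      E ∩ A T = if (((s ∩ T).card : ℕ) : ℝ) ∈ B then A T else ∅ := by
    intro T
    have hsum : ∀ ω ∈ A T, ∑ i ∈ s, X i ω = (((s ∩ T).card : ℕ) : ℝ) := by
      intro ω hω
      have h1 : ∀ i, X i ω = v T i := by
        intro i
        have := Set.mem_iInter.1 hω i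
        simpa using this
      calc ∑ i ∈ s, X i ω = ∑ i ∈ s, (if i ∈ T then (1:ℝ) else 0) := by
            apply Finset.sum_congr rfl
            intro i _
            rw [h1 i, hv]
        _ = ((s.filter (· ∈ T)).card : ℝ) := by rw [Finset.sum_boole]
        _ = (((s ∩ T).card : ℕ) : ℝ) := by rw [Finset.filter_mem_eq_inter]
    by_cases hc : (((s ∩ T).card : ℕ) : ℝ) ∈ B
    · rw [if_pos hc]
      ext ω
      simp only [Set.mem_inter_iff, hEdef, Set.mem_setOf_eq, and_iff_right_iff_imp]
      intro hω
      rw [hsum ω hω]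
      exact hc
    · rw [if_neg hc]
      ext ω
      simp only [Set.mem_inter_iff, hEdef, Set.mem_setOf_eq, Set.mem_empty_iff_false,
        iff_false, not_and]
      intro hE hA'
      rw [hsum ω hA'] at hE
      exact hc hE
  -- null complement
  have hNnull : μ {ω | ¬ ∀ i, X i ω = 1 ∨ X i ω = 0} = 0 := by
    have hsub : {ω | ¬ ∀ i, X i ω = 1 ∨ X i ω = 0}
        ⊆ ⋃ i, ({ω | X i ω = 1} ∪ {ω | X i ω = 0})ᶜ := by
      intro ω hω
      simp only [Set.mem_setOf_eq, not_forall] at hω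
      obtain ⟨i, hi⟩ := hω
      apply Set.mem_iUnion.2 ⟨i, ?_⟩
      simp only [Set.mem_compl_iff, Set.mem_union, Set.mem_setOf_eq]
      tauto
    apply MeasureTheory.measure_mono_null hsub
    apply MeasureTheory.measure_iUnion_null
    intro i
    have hm1 : MeasurableSet {ω | X i ω = 1} := by
      rw [← hpre1 i]; exact hXmeas i (measurableSet_singleton _)
    have hm0 : MeasurableSet {ω | X i ω = 0} := by
      rw [← hpre0 i]; exact hXmeas i (measurableSet_singleton _)
    have hdisj : Disjoint {ω | X i ω = 1} {ω | X i ω = 0} := by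
      rw [Set.disjoint_left]
      intro ω h1 h0
      simp only [Set.mem_setOf_eq] at h1 h0
      rw [h1] at h0
      norm_num at h0
    have hunion : μ ({ω | X i ω = 1} ∪ {ω | X i ω = 0}) = 1 := by
      rw [MeasureTheory.measure_union hdisj hm0, hBern1 i, hBern0 i,
        ← ENNReal.ofReal_add hp0.le (by linarith)]
      norm_num
    rw [MeasureTheory.measure_compl (hm1.union hm0) (MeasureTheory.measure_ne_top μ _),
      hunion]
    simp
  -- covering
  have hcover : {ω | ∀ i, X i ω = 1 ∨ X i ω = 0} ⊆ ⋃ T : Finset (Fin n), A T := by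
    intro ω hω
    simp only [Set.mem_setOf_eq] at hω
    apply Set.mem_iUnion.2
    refine ⟨Finset.univ.filter (fun i => X i ω = 1), ?_⟩
    rw [hA]
    apply Set.mem_iInter.2
    intro i
    simp only [Set.mem_preimage, Set.mem_singleton_iff, hv, Finset.mem_filter,
      Finset.mem_univ, true_and]
    rcases hω i with h | h
    · rw [if_pos h]; exact h
    · rw [if_neg (by rw [h]; norm_num), h]
  have hmuE : μ E = μ (⋃ T : Finset (Fin n), (E ∩ A T)) := by
    apply le_antisymm
    · calc μ E ≤ μ ((⋃ T : Finset (Fin n), (E ∩ A T)) ∪ {ω | ¬ ∀ i, X i ω = 1 ∨ X i ω = 0}) := by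
            apply MeasureTheory.measure_mono
            intro ω hω
            by_cases hgood : ∀ i, X i ω = 1 ∨ X i ω = 0
            · left
              obtain ⟨T, hT⟩ := Set.mem_iUnion.1 (hcover hgood)
              exact Set.mem_iUnion.2 ⟨T, ⟨hω, hT⟩⟩
            · right
              exact hgood
        _ ≤ μ (⋃ T : Finset (Fin n), (E ∩ A T)) + μ {ω | ¬ ∀ i, X i ω = 1 ∨ X i ω = 0} :=
            MeasureTheory.measure_union_le _ _
        _ = μ (⋃ T : Finset (Fin n), (E ∩ A T)) := by rw [hNnull, add_zero]
    · apply MeasureTheory.measure_mono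
      apply Set.iUnion_subset
      intro T
      exact Set.inter_subset_left
  have hmeasEA : ∀ T : Finset (Fin n), MeasurableSet (E ∩ A T) := by
    intro T
    rw [hEA T]
    by_cases hc : (((s ∩ T).card : ℕ) : ℝ) ∈ B
    · rw [if_pos hc]; exact hAmeas T
    · rw [if_neg hc]; exact MeasurableSet.empty
  have hdisjEA : Pairwise (Function.onFun Disjoint (fun T => E ∩ A T)) := by
    intro T T' hTT'
    exact Set.disjoint_of_subset Set.inter_subset_right Set.inter_subset_right (hAdisj hTT')
  have hsum2 : μ E = ∑ T : Finset (Fin n),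
      (if (((s ∩ T).card : ℕ) : ℝ) ∈ B
        then ENNReal.ofReal (p ^ T.card * (1-p) ^ (n - T.card)) else 0) := by
    rw [hmuE, MeasureTheory.measure_iUnion hdisjEA hmeasEA, tsum_fintype]
    apply Finset.sum_congr rfl
    intro T _
    rw [hEA T]
    by_cases hc : (((s ∩ T).card : ℕ) : ℝ) ∈ B
    · rw [if_pos hc, if_pos hc, hAT T]
    · rw [if_neg hc, if_neg hc, MeasureTheory.measure_empty]
  -- to real
  have hreal : (μ E).toReal = ∑ T : Finset (Fin n),
      (if (((s ∩ T).card : ℕ) : ℝ) ∈ B then p ^ T.card * (1-p) ^ (n - T.card) else 0) := by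
    rw [hsum2, ENNReal.toReal_sum]
    · apply Finset.sum_congr rfl
      intro T _
      by_cases hc : (((s ∩ T).card : ℕ) : ℝ) ∈ B
      · rw [if_pos hc, if_pos hc, ENNReal.toReal_ofReal
          (mul_nonneg (pow_nonneg hp0.le _) (pow_nonneg (by linarith) _))]
      · rw [if_neg hc, if_neg hc]; simp
    · intro T _
      by_cases hc : (((s ∩ T).card : ℕ) : ℝ) ∈ B
      · rw [if_pos hc]; exact ENNReal.ofReal_ne_top
      · rw [if_neg hc]; exact ENNReal.zero_ne_top
  rw [hreal]
  -- combinatorial regrouping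
  have hgroup := sum_subsets (p := p) s (fun k => if ((k:ℕ):ℝ) ∈ B then 1 else 0)
  rw [pow_sum_powerset hp0.le hp1.le, mul_one] at hgroup
  calc ∑ T : Finset (Fin n),
      (if (((s ∩ T).card : ℕ) : ℝ) ∈ B then p ^ T.card * (1-p) ^ (n - T.card) else 0)
      = ∑ T : Finset (Fin n), (if (((s ∩ T).card : ℕ) : ℝ) ∈ B then (1:ℝ) else 0)
          * p ^ T.card * (1-p) ^ (n - T.card) := by
        apply Finset.sum_congr rfl
        intro T _
        by_cases hc : (((s ∩ T).card : ℕ) : ℝ) ∈ B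
        · rw [if_pos hc, if_pos hc, one_mul]
        · rw [if_neg hc, if_neg hc, zero_mul, zero_mul]
    _ = ∑ k ∈ range (s.card + 1), (if ((k:ℕ):ℝ) ∈ B then (1:ℝ) else 0) * binw p s.card k :=
        hgroup
    _ = ∑ k ∈ range (s.card + 1), (if ((k:ℕ):ℝ) ∈ B then binw p s.card k else 0) := by
        apply Finset.sum_congr rfl
        intro k _
        by_cases hc : ((k:ℕ):ℝ) ∈ B
        · rw [if_pos hc, if_pos hc, one_mul]
        · rw [if_neg hc, if_neg hc, zero_mul]

lemma t_eq {p ε : ℝ} (hp0 : 0 < p) (hp1 : p < 1) (hε : 0 < ε) :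
    (Real.exp ε - 1) / (Real.exp ε + p / (1-p))
      = ((1-p) * (Real.exp ε - 1)) / (1 + (1-p) * (Real.exp ε - 1)) := by
  have h1 : (0:ℝ) < 1 - p := by linarith
  have hE1 : 1 < Real.exp ε := by rw [← Real.exp_zero]; exact Real.exp_lt_exp.2 hε
  have h2 : (0:ℝ) < Real.exp ε + p / (1-p) := by positivity
  have h3 : (0:ℝ) < 1 + (1-p) * (Real.exp ε - 1) := by nlinarith
  have h4 : Real.exp ε + p / (1-p) = (1 + (1-p) * (Real.exp ε - 1)) / (1-p) := by
    rw [eq_div_iff h1.ne', add_mul, div_mul_cancel₀ _ h1.ne']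
    ring
  rw [h4, div_div_eq_mul_div]
  ring

/-- Noiseless privacy of the sum of i.i.d. Bernoulli(p) variables, for fixed `ε`:
for every index `j` and every (measurable) set `B`, the probability that the full sum lies
in `B` is at most `e^ε` times the probability that the sum with coordinate `j` removed lies
in `B`, plus `δ`, and symmetrically. -/
theorem bernoulli_sum_noiseless_privacy_fixed_eps
    {Ω : Type*} [MeasurableSpace Ω] (μ : Measure Ω) [IsProbabilityMeasure μ]
    (n : ℕ) (hn : 1 ≤ n) (p : ℝ) (hp0 : 0 < p) (hp1 : p < 1)
    (X : Fin n → Ω → ℝ) (hXmeas : ∀ i, Measurable (X i))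
    (hindep : iIndepFun X μ)
    (hBern1 : ∀ i, μ {ω | X i ω = 1} = ENNReal.ofReal p)
    (hBern0 : ∀ i, μ {ω | X i ω = 0} = ENNReal.ofReal (1 - p))
    (ε : ℝ) (hε : 0 < ε)
    (δ : ℝ)
    (hδ : δ = if p ≤ 1 / 2 then
        2 * Real.exp (-2 * (n : ℝ) * p ^ 2 *
          ((Real.exp ε - 1) / (Real.exp ε + p / (1 - p))) ^ 2)
      else
        2 * Real.exp (-2 * (n : ℝ) * (1 - p) ^ 2 *
          ((Real.exp ε - 1) / (Real.exp ε + (1 - p) / p)) ^ 2)) :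
    ∀ j : Fin n, ∀ B : Set ℝ, MeasurableSet B →
      (μ {ω | (∑ i, X i ω) ∈ B}).toReal
          ≤ Real.exp ε * (μ {ω | (∑ i ∈ Finset.univ.erase j, X i ω) ∈ B}).toReal + δ ∧
      (μ {ω | (∑ i ∈ Finset.univ.erase j, X i ω) ∈ B}).toReal
          ≤ Real.exp ε * (μ {ω | (∑ i, X i ω) ∈ B}).toReal + δ := by
  classical
  intro j B _hB
  have hcard1 : (Finset.univ : Finset (Fin n)).card = n := by simp
  have hcard2 : (Finset.univ.erase j).card = n - 1 := by
    rw [Finset.card_erase_of_mem (Finset.mem_univ j)]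
    simp
  have hS := law_sum μ hp0 hp1 X hXmeas hindep hBern1 hBern0 Finset.univ B
  rw [hcard1] at hS
  have hS' := law_sum μ hp0 hp1 X hXmeas hindep hBern1 hBern0 (Finset.univ.erase j) B
  rw [hcard2, show n - 1 + 1 = n from by omega] at hS'
  rw [hS, hS', hδ]
  by_cases hp12 : p ≤ 1/2
  · rw [if_pos hp12, t_eq hp0 hp1 hε]
    exact ⟨coreA hp0 hp12 hε hn (fun k => ((k:ℕ):ℝ) ∈ B),
      coreB hp0 hp12 hε hn (fun k => ((k:ℕ):ℝ) ∈ B)⟩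
  · push_neg at hp12
    rw [if_neg (not_le.2 hp12)]
    set P : ℝ := 1 - p with hP
    have hP0 : 0 < P := by rw [hP]; linarith
    have hP1 : P < 1 := by rw [hP]; linarith
    have hP12 : P ≤ 1/2 := by rw [hP]; linarith
    have ht2 : (Real.exp ε - 1) / (Real.exp ε + (1 - p) / p)
        = ((1-P) * (Real.exp ε - 1)) / (1 + (1-P) * (Real.exp ε - 1)) := by
      have h1P : 1 - P = p := by rw [hP]; ring
      rw [h1P]
      have hE1 : 1 < Real.exp ε := by rw [← Real.exp_zero]; exact Real.exp_lt_exp.2 hε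
      have h2 : (0:ℝ) < Real.exp ε + (1-p) / p := by positivity
      have h3 : (0:ℝ) < 1 + p * (Real.exp ε - 1) := by nlinarith
      field_simp
      ring
    rw [ht2]
    have hrefl1 : ∑ k ∈ range (n+1), (if ((k:ℕ):ℝ) ∈ B then binw p n k else 0)
        = ∑ k ∈ range (n+1), (if (((n - k : ℕ):ℕ):ℝ) ∈ B then binw P n k else 0) := by
      rw [hP]
      exact reflect_sum (fun k => ((k:ℕ):ℝ) ∈ B)
    have hrefl2 : ∑ k ∈ range n, (if ((k:ℕ):ℝ) ∈ B then binw p (n-1) k else 0)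
        = ∑ k ∈ range n, (if (((n - (k+1) : ℕ):ℕ):ℝ) ∈ B then binw P (n-1) k else 0) := by
      rw [hP]
      have h4 := reflect_sum (p := p) (m := n - 1) (fun k => ((k:ℕ):ℝ) ∈ B)
      rw [show n - 1 + 1 = n from by omega] at h4
      rw [h4]
      apply Finset.sum_congr rfl
      intro k _
      rw [show n - 1 - k = n - (k+1) from by omega]
    rw [hrefl1, hrefl2]
    exact ⟨coreA' hP0 hP1 hε hn (fun k => ((n - k : ℕ):ℝ) ∈ B),
      coreB' hP0 hP12 hε hn (fun k => ((n - k : ℕ):ℝ) ∈ B)⟩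
end
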